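/- arXiv:2206.07425 — 4 statements merged into one kernel-verified Lean document; each statement's English description precedes it below -/
import Mathlib

section
/- Consider the time-invariant single-virus layered SIWS model under Assumption A1, with initial condition x_i(0) ∈ [0,1] for all i ∈ {1,…,n} and w_j(0) ∈ [0, w_max] for all j ∈ {1,…,m}. Then for every t ≥ 0 one has x_i(t) ∈ [0,1] for all i and w_j(t) ∈ [0, w_max] for all j; that is, the set D = [0,1]^n × [0, w_max]^m is positively invariant for the dynamics. -/
open Matrix Filter

/-- Index type of the layered system: `n` population nodes plus `m` resource nodes. -/
abbrev SIdx (n m : ℕ) := Fin n ⊕ Fin m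

/-- Spectral radius of a real square matrix (largest modulus of a complex eigenvalue). -/
noncomputable def specRad {ι : Type} [Fintype ι] [DecidableEq ι] (M : Matrix ι ι ℝ) : ℝ :=
  sSup {r : ℝ | ∃ μ ∈ spectrum ℂ (M.map fun x => (x : ℂ)), r = ‖μ‖}

/-- Irreducibility of a matrix: every node can reach every other node in the associated graph. -/
def Irred {ι : Type} [Fintype ι] [DecidableEq ι] (M : Matrix ι ι ℝ) : Prop :=
  ∀ i j : ι, i ≠ j → ∃ k : ℕ, (M ^ k) i j ≠ 0

/-- The matrix `Z(z)`: diagonal of the population part of the state, zeros elsewhere. -/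
noncomputable def Zm {n m : ℕ} (z : SIdx n m → ℝ) : Matrix (SIdx n m) (SIdx n m) ℝ :=
  Matrix.diagonal (Sum.elim (fun i => z (Sum.inl i)) fun _ => (0 : ℝ))

/-- The layered infection matrix `B_f = [[B, B_w],[C_w, 0]]`. -/
noncomputable def BfM {n m : ℕ} (B : Matrix (Fin n) (Fin n) ℝ) (Bw : Matrix (Fin n) (Fin m) ℝ)
    (Cw : Matrix (Fin m) (Fin n) ℝ) : Matrix (SIdx n m) (SIdx n m) ℝ :=
  Matrix.fromBlocks B Bw Cw 0

/-- The layered healing matrix `D_f = diag(δ, δ^w)`. -/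
noncomputable def DfM {n m : ℕ} (δ : Fin n → ℝ) (δw : Fin m → ℝ) :
    Matrix (SIdx n m) (SIdx n m) ℝ :=
  Matrix.diagonal (Sum.elim δ δw)

/-- One step of the single-virus SIWS dynamics:
`z ↦ z − h (D_f − (I − Z(z)) B_f) z`. -/
noncomputable def step {n m : ℕ} (h : ℝ) (Dfm Bfm : Matrix (SIdx n m) (SIdx n m) ℝ)
    (z : SIdx n m → ℝ) : SIdx n m → ℝ :=
  z - h • ((Dfm - (1 - Zm z) * Bfm).mulVec z)

/-- The system domain `D = [0,1]^n × [0, w_max]^m`. -/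
def inD {n m : ℕ} (wmax : ℝ) (z : SIdx n m → ℝ) : Prop :=
  (∀ i : Fin n, z (Sum.inl i) ∈ Set.Icc (0 : ℝ) 1) ∧
    ∀ j : Fin m, z (Sum.inr j) ∈ Set.Icc (0 : ℝ) wmax

/-- Assumption A1 on the parameters of the single-virus SIWS model. -/
structure A1 {n m : ℕ} (h : ℝ) (δ : Fin n → ℝ) (δw : Fin m → ℝ)
    (B : Matrix (Fin n) (Fin n) ℝ) (Bw : Matrix (Fin n) (Fin m) ℝ)
    (Cw : Matrix (Fin m) (Fin n) ℝ) (wmax : ℝ) : Prop where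
  h_pos : 0 < h
  delta_pos : ∀ i, 0 < δ i
  deltaw_pos : ∀ j, 0 < δw j
  B_nonneg : ∀ i j, 0 ≤ B i j
  Bw_nonneg : ∀ i j, 0 ≤ Bw i j
  Cw_nonneg : ∀ j k, 0 ≤ Cw j k
  Cw_row_pos : ∀ j, ∃ k, 0 < Cw j k
  wmax_pos : 0 < wmax
  ratio_mem : ∀ j, (∑ k, Cw j k) / δw j ∈ Set.Icc (0 : ℝ) wmax
  h_delta : ∀ i, h * δ i ∈ Set.Ioc (0 : ℝ) 1
  h_deltaw : ∀ j, h * δw j ∈ Set.Ioc (0 : ℝ) 1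
  h_beta : ∀ i, h * ((∑ j, B i j) + ∑ j, Bw i j * wmax) ∈ Set.Icc (0 : ℝ) 1

/-- Assumption A3: `h(δ_i + Σ_j β_{ij} + Σ_j β^w_{ij} w_max) ∈ [0,1]` for all `i`. -/
def A3 {n m : ℕ} (h : ℝ) (δ : Fin n → ℝ) (B : Matrix (Fin n) (Fin n) ℝ)
    (Bw : Matrix (Fin n) (Fin m) ℝ) (wmax : ℝ) : Prop :=
  ∀ i, h * (δ i + (∑ j, B i j) + ∑ j, Bw i j * wmax) ∈ Set.Icc (0 : ℝ) 1


lemma step_inl {n m : ℕ} (h : ℝ) (δ : Fin n → ℝ) (δw : Fin m → ℝ)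
    (B : Matrix (Fin n) (Fin n) ℝ) (Bw : Matrix (Fin n) (Fin m) ℝ)
    (Cw : Matrix (Fin m) (Fin n) ℝ) (z : SIdx n m → ℝ) (i : Fin n) :
    step h (DfM δ δw) (BfM B Bw Cw) z (Sum.inl i)
      = z (Sum.inl i) - h * (δ i * z (Sum.inl i)
        - (1 - z (Sum.inl i)) * ((∑ j, B i j * z (Sum.inl j)) + ∑ j, Bw i j * z (Sum.inr j))) := by
  have h1 : (1 - Zm z : Matrix (SIdx n m) (SIdx n m) ℝ)
      = Matrix.diagonal (fun k => 1 - Sum.elim (fun i => z (Sum.inl i)) (fun _ => (0:ℝ)) k) := by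
    rw [Zm, ← Matrix.diagonal_one, Matrix.diagonal_sub]
  simp [step, DfM, h1, Matrix.sub_mulVec, Matrix.mulVec_diagonal,
    ← Matrix.mulVec_mulVec, BfM, Matrix.mulVec, dotProduct,
    Fintype.sum_sum_type, sub_mul, mul_comm, Matrix.diagonal_apply, mul_ite, ite_mul,
    Finset.sum_ite_eq, Finset.sum_ite_eq']

lemma step_inr {n m : ℕ} (h : ℝ) (δ : Fin n → ℝ) (δw : Fin m → ℝ)
    (B : Matrix (Fin n) (Fin n) ℝ) (Bw : Matrix (Fin n) (Fin m) ℝ)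
    (Cw : Matrix (Fin m) (Fin n) ℝ) (z : SIdx n m → ℝ) (j : Fin m) :
    step h (DfM δ δw) (BfM B Bw Cw) z (Sum.inr j)
      = z (Sum.inr j) - h * (δw j * z (Sum.inr j) - ∑ k, Cw j k * z (Sum.inl k)) := by
  have h1 : (1 - Zm z : Matrix (SIdx n m) (SIdx n m) ℝ)
      = Matrix.diagonal (fun k => 1 - Sum.elim (fun i => z (Sum.inl i)) (fun _ => (0:ℝ)) k) := by
    rw [Zm, ← Matrix.diagonal_one, Matrix.diagonal_sub]
  simp [step, DfM, h1, Matrix.sub_mulVec, Matrix.mulVec_diagonal,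
    ← Matrix.mulVec_mulVec, BfM, Matrix.mulVec, dotProduct,
    Fintype.sum_sum_type, sub_mul, mul_comm, Matrix.diagonal_apply, mul_ite, ite_mul,
    Finset.sum_ite_eq, Finset.sum_ite_eq']

/-- positive invariance of `D = [0,1]^n × [0,w_max]^m` for the time-invariant
single-virus layered SIWS model under Assumption A1. -/
theorem stmt0 {n m : ℕ} (h wmax : ℝ) (δ : Fin n → ℝ) (δw : Fin m → ℝ)
    (B : Matrix (Fin n) (Fin n) ℝ) (Bw : Matrix (Fin n) (Fin m) ℝ)
    (Cw : Matrix (Fin m) (Fin n) ℝ)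
    (hA1 : A1 h δ δw B Bw Cw wmax)
    (z : ℕ → SIdx n m → ℝ)
    (hdyn : ∀ t, z (t + 1) = step h (DfM δ δw) (BfM B Bw Cw) (z t))
    (hinit : inD wmax (z 0)) :
    ∀ t, inD wmax (z t) := by
  intro t
  induction t with
  | zero => exact hinit
  | succ t ih =>
    obtain ⟨ihx, ihw⟩ := ih
    have hh := hA1.h_pos
    constructor
    · intro i
      rw [hdyn t, step_inl]
      set x := z t (Sum.inl i) with hx
      set s := (∑ j, B i j * z t (Sum.inl j)) + ∑ j, Bw i j * z t (Sum.inr j) with hs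
      have hx0 : 0 ≤ x := (ihx i).1
      have hx1 : x ≤ 1 := (ihx i).2
      have hs0 : 0 ≤ s := by
        apply add_nonneg <;> apply Finset.sum_nonneg <;> intro j _
        · exact mul_nonneg (hA1.B_nonneg i j) (ihx j).1
        · exact mul_nonneg (hA1.Bw_nonneg i j) (ihw j).1
      have hsS : s ≤ (∑ j, B i j) + ∑ j, Bw i j * wmax := by
        apply add_le_add <;> apply Finset.sum_le_sum <;> intro j _
        · nlinarith [hA1.B_nonneg i j, (ihx j).1, (ihx j).2]
        · exact mul_le_mul_of_nonneg_left (ihw j).2 (hA1.Bw_nonneg i j)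
      have hhs : h * s ≤ 1 := le_trans (by nlinarith) (hA1.h_beta i).2
      have hd1 := (hA1.h_delta i).1
      have hd2 := (hA1.h_delta i).2
      constructor
      · nlinarith [mul_nonneg (mul_nonneg hh.le hs0) (sub_nonneg.2 hx1)]
      · nlinarith [mul_nonneg hh.le hs0, mul_nonneg (mul_nonneg hh.le hs0) hx0]
    · intro j
      rw [hdyn t, step_inr]
      set w := z t (Sum.inr j) with hw
      have hw0 : 0 ≤ w := (ihw j).1
      have hw1 : w ≤ wmax := (ihw j).2
      have hdw := hA1.deltaw_pos j
      have hc0 : (0:ℝ) ≤ ∑ k, Cw j k * z t (Sum.inl k) := by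
        apply Finset.sum_nonneg; intro k _
        exact mul_nonneg (hA1.Cw_nonneg j k) (ihx k).1
      have hcw : (∑ k, Cw j k * z t (Sum.inl k)) ≤ δw j * wmax := by
        have h1 : (∑ k, Cw j k * z t (Sum.inl k)) ≤ ∑ k, Cw j k := by
          apply Finset.sum_le_sum; intro k _
          nlinarith [hA1.Cw_nonneg j k, (ihx k).1, (ihx k).2]
        have h2 := (hA1.ratio_mem j).2
        rw [div_le_iff₀ hdw] at h2
        linarith [h1, h2]
      have hd1 := (hA1.h_deltaw j).1
      have hd2 := (hA1.h_deltaw j).2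
      constructor
      · nlinarith [mul_nonneg hh.le hc0]
      · nlinarith [mul_nonneg hh.le hc0]
end

section
/- Consider the time-invariant single-virus layered SIWS model under Assumptions A1 and A2. If ρ(I − hD_f + hB_f) > 1, then the model has exactly two equilibria in D: the healthy state 0 and an endemic equilibrium z* with all entries strictly positive. Consequently, the healthy state is the unique equilibrium in D if and only if ρ(I − hD_f + hB_f) ≤ 1. -/
open Matrix Filter

namespace PFaux

set_option linter.unusedSectionVars false
variable {ι : Type} [Fintype ι] [DecidableEq ι]

lemma mulVec_eq_sum (A : Matrix ι ι ℝ) (x : ι → ℝ) (i : ι) :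
    A.mulVec x i = ∑ j, A i j * x j := rfl

lemma mulVec_nonneg {A : Matrix ι ι ℝ} (hA : ∀ i j, 0 ≤ A i j) {x : ι → ℝ}
    (hx : ∀ i, 0 ≤ x i) (i : ι) : 0 ≤ A.mulVec x i :=
  Finset.sum_nonneg fun j _ => mul_nonneg (hA i j) (hx j)

lemma mulVec_mono {A : Matrix ι ι ℝ} (hA : ∀ i j, 0 ≤ A i j) {x y : ι → ℝ}
    (hxy : ∀ i, x i ≤ y i) (i : ι) : A.mulVec x i ≤ A.mulVec y i :=
  Finset.sum_le_sum fun j _ => mul_le_mul_of_nonneg_left (hxy j) (hA i j)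

lemma irred_escape {A : Matrix ι ι ℝ} (hA : ∀ i j, 0 ≤ A i j) (hirr : Irred A)
    {S : Finset ι} (hS : S.Nonempty) (hSU : S ≠ Finset.univ) :
    ∃ i ∉ S, ∃ j ∈ S, 0 < A i j := by
  by_contra hcon
  push_neg at hcon
  have hzero : ∀ i ∉ S, ∀ j ∈ S, A i j = 0 := fun i hi j hj =>
    le_antisymm (hcon i hi j hj) (hA i j)
  have hpow : ∀ k, ∀ i ∉ S, ∀ j ∈ S, (A ^ k) i j = 0 := by
    intro k
    induction k with
    | zero =>
      intro i hi j hj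
      have hij : i ≠ j := fun hh => hi (hh ▸ hj)
      simp [Matrix.one_apply_ne hij]
    | succ k ih =>
      intro i hi j hj
      rw [pow_succ', Matrix.mul_apply]
      apply Finset.sum_eq_zero
      intro l _
      by_cases hl : l ∈ S
      · rw [hzero i hi l hl, zero_mul]
      · rw [ih l hl j hj, mul_zero]
  have : ∃ i, i ∉ S := by
    by_contra hall
    push_neg at hall
    exact hSU (Finset.eq_univ_iff_forall.mpr hall)
  obtain ⟨i, hi⟩ := this
  obtain ⟨j, hj⟩ := hS
  have hij : i ≠ j := fun hh => hi (hh ▸ hj)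
  obtain ⟨k, hk⟩ := hirr i j hij
  exact hk (hpow k i hi j hj)

/-- Support-growth: `(1+A)^k *ᵥ x` is everywhere positive once `k` is large enough. -/
lemma onePlus_pow_key {A : Matrix ι ι ℝ} (hA : ∀ i j, 0 ≤ A i j) (hirr : Irred A) :
    ∀ k (x : ι → ℝ), (∀ i, 0 ≤ x i) →
      (Finset.univ.filter fun i => 0 < x i).Nonempty →
      Fintype.card ι ≤ (Finset.univ.filter fun i => 0 < x i).card + k →
      ∀ i, 0 < ((1 + A) ^ k).mulVec x i := by
  intro k
  induction k with
  | zero =>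
    intro x hx hne hcard i
    have huniv : (Finset.univ.filter fun i => 0 < x i) = Finset.univ := by
      apply Finset.eq_univ_of_card
      have hle : (Finset.univ.filter fun i => 0 < x i).card ≤ Fintype.card ι :=
        (Finset.card_filter_le _ _).trans (le_of_eq (Finset.card_univ))
      omega
    have hxpos : ∀ j, 0 < x j := by
      intro j
      have hj : j ∈ (Finset.univ.filter fun i => 0 < x i) := by
        rw [huniv]; exact Finset.mem_univ j
      exact (Finset.mem_filter.mp hj).2
    simpa using hxpos i
  | succ k ih =>
    intro x hx hne hcard i
    set y : ι → ℝ := (1 + A).mulVec x with hy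
    have hyx : ∀ j, x j ≤ y j := by
      intro j
      have : y j = x j + A.mulVec x j := by
        rw [hy, Matrix.add_mulVec, Matrix.one_mulVec]; rfl
      rw [this]
      exact le_add_of_nonneg_right (mulVec_nonneg hA hx j)
    have hy0 : ∀ j, 0 ≤ y j := fun j => le_trans (hx j) (hyx j)
    have hsub : (Finset.univ.filter fun i => 0 < x i) ⊆
        (Finset.univ.filter fun i => 0 < y i) := by
      intro j hj
      rw [Finset.mem_filter] at hj ⊢
      exact ⟨hj.1, lt_of_lt_of_le hj.2 (hyx j)⟩
    have hstep : ((1 + A) ^ (k + 1)).mulVec x = ((1 + A) ^ k).mulVec y := by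
      rw [hy, Matrix.mulVec_mulVec, ← pow_succ]
    rw [hstep]
    by_cases hU : (Finset.univ.filter fun i => 0 < x i) = Finset.univ
    · have hUy : (Finset.univ.filter fun i => 0 < y i) = Finset.univ :=
        Finset.eq_univ_of_forall fun j => hsub (by rw [hU]; exact Finset.mem_univ j)
      have hcx : (Finset.univ.filter fun i => 0 < x i).card = Fintype.card ι := by
        rw [hU, Finset.card_univ]
      have hcy : (Finset.univ.filter fun i => 0 < y i).card = Fintype.card ι := by
        rw [hUy, Finset.card_univ]
      exact ih y hy0 (hne.mono hsub) (by omega) i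
    · obtain ⟨a, ha, b, hb, hab⟩ := irred_escape hA hirr hne hU
      have hxb : 0 < x b := (Finset.mem_filter.mp hb).2
      have hya : 0 < y a := by
        have hAx : A a b * x b ≤ A.mulVec x a := by
          rw [mulVec_eq_sum]
          exact Finset.single_le_sum (fun j _ => mul_nonneg (hA a j) (hx j))
            (Finset.mem_univ b)
        have : 0 < A.mulVec x a := lt_of_lt_of_le (mul_pos hab hxb) hAx
        calc (0:ℝ) < A.mulVec x a := this
          _ ≤ y a := by
            have : y a = x a + A.mulVec x a := by
              rw [hy, Matrix.add_mulVec, Matrix.one_mulVec]; rfl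
            rw [this]; exact le_add_of_nonneg_left (hx a)
      have hssub : (Finset.univ.filter fun i => 0 < x i) ⊂
          (Finset.univ.filter fun i => 0 < y i) := by
        refine Finset.ssubset_iff_of_subset hsub |>.mpr ⟨a, ?_, ?_⟩
        · exact Finset.mem_filter.mpr ⟨Finset.mem_univ a, hya⟩
        · exact ha
      have hcard' := Finset.card_lt_card hssub
      exact ih y hy0 (hne.mono hsub) (by omega) i

lemma onePlus_pow_pos {A : Matrix ι ι ℝ} (hA : ∀ i j, 0 ≤ A i j) (hirr : Irred A)
    {x : ι → ℝ} (hx : ∀ i, 0 ≤ x i) (hx0 : x ≠ 0) (i : ι) :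
    0 < ((1 + A) ^ (Fintype.card ι - 1)).mulVec x i := by
  have hne : (Finset.univ.filter fun i => 0 < x i).Nonempty := by
    obtain ⟨j, hj⟩ : ∃ j, x j ≠ 0 := by
      by_contra hall; push_neg at hall; exact hx0 (funext hall)
    exact ⟨j, Finset.mem_filter.mpr ⟨Finset.mem_univ j, lt_of_le_of_ne (hx j) (Ne.symm hj)⟩⟩
  have hcard1 : 1 ≤ (Finset.univ.filter fun i => 0 < x i).card := Finset.card_pos.mpr hne
  have hcard2 : 1 ≤ Fintype.card ι := Fintype.card_pos_iff.mpr ⟨i⟩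
  exact onePlus_pow_key hA hirr _ x hx hne (by omega) i

/-- Existence of the maximizing pair for the Collatz–Wielandt problem, together with
the universal upper-bound property. -/
lemma cw_max {A : Matrix ι ι ℝ} (hA : ∀ i j, 0 ≤ A i j) [Nonempty ι] :
    ∃ (r : ℝ) (x₀ : ι → ℝ), 0 ≤ r ∧ (∀ i, 0 ≤ x₀ i) ∧ (∑ i, x₀ i) = 1 ∧
      (∀ i, r * x₀ i ≤ A.mulVec x₀ i) ∧
      (∀ (θ : ℝ) (x : ι → ℝ), 0 ≤ θ → (∀ i, 0 ≤ x i) → x ≠ 0 →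
        (∀ i, θ * x i ≤ A.mulVec x i) → θ ≤ r) := by
  classical
  set M : ℝ := ∑ i, ∑ j, A i j with hM
  -- any admissible θ with a normalized vector is ≤ M
  have theta_le : ∀ (θ : ℝ) (x : ι → ℝ), 0 ≤ θ → (∀ i, 0 ≤ x i) → (∑ i, x i) = 1 →
      (∀ i, θ * x i ≤ A.mulVec x i) → θ ≤ M := by
    intro θ x hθ hx hsum hineq
    have hx1 : ∀ j, x j ≤ 1 := by
      intro j
      calc x j ≤ ∑ i, x i := Finset.single_le_sum (fun i _ => hx i) (Finset.mem_univ j)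
        _ = 1 := hsum
    calc θ = θ * ∑ i, x i := by rw [hsum, mul_one]
      _ = ∑ i, θ * x i := by rw [Finset.mul_sum]
      _ ≤ ∑ i, A.mulVec x i := Finset.sum_le_sum fun i _ => hineq i
      _ = ∑ i, ∑ j, A i j * x j := rfl
      _ ≤ ∑ i, ∑ j, A i j := by
        refine Finset.sum_le_sum fun i _ => Finset.sum_le_sum fun j _ => ?_
        calc A i j * x j ≤ A i j * 1 := mul_le_mul_of_nonneg_left (hx1 j) (hA i j)
          _ = A i j := mul_one _
  set Ω : Set (ℝ × (ι → ℝ)) :=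
    {p | 0 ≤ p.1} ∩ {p | ∀ i, 0 ≤ p.2 i} ∩ {p | (∑ i, p.2 i) = 1} ∩
      {p | ∀ i, p.1 * p.2 i ≤ ∑ j, A i j * p.2 j} with hΩ
  have hmemΩ : ∀ p : ℝ × (ι → ℝ), p ∈ Ω ↔
      0 ≤ p.1 ∧ (∀ i, 0 ≤ p.2 i) ∧ (∑ i, p.2 i) = 1 ∧
        ∀ i, p.1 * p.2 i ≤ A.mulVec p.2 i := by
    intro p
    simp only [hΩ, Set.mem_inter_iff, Set.mem_setOf_eq, mulVec_eq_sum]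
    tauto
  have hclosed : IsClosed Ω := by
    refine IsClosed.inter (IsClosed.inter (IsClosed.inter ?_ ?_) ?_) ?_
    · exact isClosed_le continuous_const continuous_fst
    · have hrw : {p : ℝ × (ι → ℝ) | ∀ i, 0 ≤ p.2 i} = ⋂ i, {p : ℝ × (ι → ℝ) | 0 ≤ p.2 i} := by
        ext p; simp
      rw [hrw]
      exact isClosed_iInter fun i =>
        isClosed_le continuous_const ((continuous_apply i).comp continuous_snd)
    · exact isClosed_eq (continuous_finset_sum _ fun i _ =>
        (continuous_apply i).comp continuous_snd) continuous_const
    · have hrw : {p : ℝ × (ι → ℝ) | ∀ i, p.1 * p.2 i ≤ ∑ j, A i j * p.2 j} =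
          ⋂ i, {p : ℝ × (ι → ℝ) | p.1 * p.2 i ≤ ∑ j, A i j * p.2 j} := by
        ext p; simp
      rw [hrw]
      exact isClosed_iInter fun i =>
        isClosed_le (continuous_fst.mul ((continuous_apply i).comp continuous_snd))
          (continuous_finset_sum _ fun j _ =>
            continuous_const.mul ((continuous_apply j).comp continuous_snd))
  have hsubK : Ω ⊆ (Set.Icc (0:ℝ) M) ×ˢ (Set.Icc (0 : ι → ℝ) 1) := by
    intro p hp
    rw [hmemΩ] at hp
    obtain ⟨h1, h2, h3, h4⟩ := hp
    constructor
    · exact ⟨h1, theta_le p.1 p.2 h1 h2 h3 h4⟩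
    · constructor
      · intro i; exact h2 i
      · intro i
        calc p.2 i ≤ ∑ j, p.2 j := Finset.single_le_sum (fun j _ => h2 j) (Finset.mem_univ i)
          _ = 1 := h3
  have hK : IsCompact ((Set.Icc (0:ℝ) M) ×ˢ (Set.Icc (0 : ι → ℝ) 1)) :=
    isCompact_Icc.prod isCompact_Icc
  have hcomp : IsCompact Ω := hK.of_isClosed_subset hclosed hsubK
  have hneΩ : Ω.Nonempty := by
    refine ⟨(0, fun _ => (Fintype.card ι : ℝ)⁻¹), ?_⟩
    rw [hmemΩ]
    have hcpos : (0:ℝ) < (Fintype.card ι : ℝ) := by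
      exact_mod_cast Fintype.card_pos_iff.mpr ‹Nonempty ι›
    refine ⟨le_refl 0, fun i => by positivity, ?_, fun i => ?_⟩
    · rw [Finset.sum_const, Finset.card_univ, nsmul_eq_mul]
      field_simp
    · rw [zero_mul]
      exact mulVec_nonneg hA (fun _ => by positivity) i
  obtain ⟨p, hpΩ, hpmax⟩ := hcomp.exists_isMaxOn hneΩ continuous_fst.continuousOn
  rw [hmemΩ] at hpΩ
  obtain ⟨hr0, hx0, hsum, hineq⟩ := hpΩ
  refine ⟨p.1, p.2, hr0, hx0, hsum, hineq, ?_⟩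
  intro θ x hθ hx hxne hxi
  set s : ℝ := ∑ i, x i with hsdef
  have hs : 0 < s := by
    refine Finset.sum_pos' (fun i _ => hx i) ?_
    obtain ⟨j, hj⟩ : ∃ j, x j ≠ 0 := by
      by_contra hall; push_neg at hall; exact hxne (funext hall)
    exact ⟨j, Finset.mem_univ j, lt_of_le_of_ne (hx j) (Ne.symm hj)⟩
  have hmem : (θ, s⁻¹ • x) ∈ Ω := by
    rw [hmemΩ]
    refine ⟨hθ, fun i => by
        have h1 := hx i
        simp only [Pi.smul_apply, smul_eq_mul]
        have h2 : (0:ℝ) ≤ s⁻¹ := inv_nonneg.mpr hs.le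
        exact mul_nonneg h2 h1, ?_, fun i => ?_⟩
    · simp only [Pi.smul_apply, smul_eq_mul, ← Finset.mul_sum, ← hsdef]
      field_simp
    · have := hxi i
      have hAsmul : A.mulVec (s⁻¹ • x) i = s⁻¹ * A.mulVec x i := by
        rw [Matrix.mulVec_smul]; rfl
      simp only [Pi.smul_apply, smul_eq_mul, hAsmul]
      calc θ * (s⁻¹ * x i) = s⁻¹ * (θ * x i) := by ring
        _ ≤ s⁻¹ * A.mulVec x i :=
          mul_le_mul_of_nonneg_left (hxi i) (inv_nonneg.mpr hs.le)
  have := hpmax hmem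
  simpa using this

/-- Perron–Frobenius: an irreducible nonnegative matrix has a strictly positive
eigenvector whose eigenvalue dominates every Collatz–Wielandt quotient. -/
lemma cw_eigen {A : Matrix ι ι ℝ} (hA : ∀ i j, 0 ≤ A i j) (hirr : Irred A) [Nonempty ι] :
    ∃ (r : ℝ) (v : ι → ℝ), 0 ≤ r ∧ (∀ i, 0 < v i) ∧ A.mulVec v = r • v ∧
      (∀ (θ : ℝ) (x : ι → ℝ), 0 ≤ θ → (∀ i, 0 ≤ x i) → x ≠ 0 →
        (∀ i, θ * x i ≤ A.mulVec x i) → θ ≤ r) := by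
  classical
  obtain ⟨r, x₀, hr0, hx0, hsum, hineq, hsup⟩ := cw_max hA
  have hx0ne : x₀ ≠ 0 := by
    intro hc
    rw [hc] at hsum
    simp at hsum
  set N : ℕ := Fintype.card ι - 1 with hN
  set P : Matrix ι ι ℝ := (1 + A) ^ N with hP
  have hPx : ∀ i, 0 < P.mulVec x₀ i := fun i => onePlus_pow_pos hA hirr hx0 hx0ne i
  -- first: A x₀ = r x₀
  have heig : ∀ i, A.mulVec x₀ i = r * x₀ i := by
    by_contra hcon
    push_neg at hcon
    set w : ι → ℝ := fun i => A.mulVec x₀ i - r * x₀ i with hw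
    have hw0 : ∀ i, 0 ≤ w i := fun i => sub_nonneg.mpr (hineq i)
    have hwne : w ≠ 0 := by
      obtain ⟨i, hi⟩ := hcon
      intro hc
      apply hi
      have := congrFun hc i
      simp only [hw, Pi.zero_apply] at this
      linarith
    have hPw : ∀ i, 0 < P.mulVec w i := fun i => onePlus_pow_pos hA hirr hw0 hwne i
    set y : ι → ℝ := P.mulVec x₀ with hy
    have hcomm : A * P = P * A := by
      have h1 : Commute A (1 + A) := (Commute.one_right A).add_right (Commute.refl A)
      exact (h1.pow_right N).eq
    have hAy : ∀ i, A.mulVec y i = r * y i + P.mulVec w i := by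
      intro i
      have h1 : A.mulVec y = P.mulVec (A.mulVec x₀) := by
        rw [hy, Matrix.mulVec_mulVec, hcomm, ← Matrix.mulVec_mulVec]
      have hsplit : A.mulVec x₀ = (fun j => r * x₀ j) + w := by
        funext j; simp [hw]
      have h2 : P.mulVec (A.mulVec x₀) i = P.mulVec (fun j => r * x₀ j) i + P.mulVec w i := by
        rw [hsplit, Matrix.mulVec_add]; rfl
      have h3 : P.mulVec (fun j => r * x₀ j) i = r * P.mulVec x₀ i := by
        have : (fun j => r * x₀ j) = r • x₀ := by funext j; simp
        rw [this, Matrix.mulVec_smul]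
        rfl
      rw [h1, h2, h3, ← hy]
    have hystrict : ∀ i, r * y i < A.mulVec y i := by
      intro i
      rw [hAy i]
      linarith [hPw i]
    obtain ⟨i₀, _, hmin⟩ := Finset.exists_min_image Finset.univ
      (fun i => A.mulVec y i / y i) Finset.univ_nonempty
    set r₂ : ℝ := A.mulVec y i₀ / y i₀ with hr₂
    have hr₂r : r < r₂ := by
      rw [hr₂, lt_div_iff₀ (hPx i₀)]
      exact hystrict i₀
    have hr₂y : ∀ i, r₂ * y i ≤ A.mulVec y i := by
      intro i
      have h1 : r₂ ≤ A.mulVec y i / y i := hmin i (Finset.mem_univ i)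
      rw [← le_div_iff₀ (hPx i)]
      exact h1
    have hyne : y ≠ 0 := by
      intro hc
      have := congrFun hc (Classical.arbitrary ι)
      simp only [Pi.zero_apply] at this
      exact absurd this (ne_of_gt (hPx _))
    have := hsup r₂ y (le_trans hr0 hr₂r.le) (fun i => (hPx i).le) hyne hr₂y
    linarith
  -- positivity of x₀ from P x₀ = (1+r)^N x₀
  have h1r : (0:ℝ) < 1 + r := by linarith
  have hPxeq : ∀ k, ((1 + A) ^ k).mulVec x₀ = (1 + r) ^ k • x₀ := by
    intro k
    induction k with
    | zero => simp [Matrix.one_mulVec]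
    | succ k ih =>
      have hstep : ((1 + A) ^ (k+1)).mulVec x₀ = ((1 + A) ^ k).mulVec ((1 + A).mulVec x₀) := by
        rw [Matrix.mulVec_mulVec, ← pow_succ]
      have h1 : (1 + A).mulVec x₀ = (1 + r) • x₀ := by
        funext i
        rw [Matrix.add_mulVec, Matrix.one_mulVec]
        have := heig i
        simp only [Pi.add_apply, Pi.smul_apply, smul_eq_mul]
        rw [this]; ring
      rw [hstep, h1, Matrix.mulVec_smul, ih, smul_smul, ← pow_succ']
  have hx0pos : ∀ i, 0 < x₀ i := by
    intro i
    have h1 : P.mulVec x₀ i = (1 + r) ^ N * x₀ i := by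
      rw [hP, hPxeq N]; rfl
    have h2 := hPx i
    rw [h1] at h2
    have h3 : (0:ℝ) < (1 + r) ^ N := pow_pos h1r N
    nlinarith
  exact ⟨r, x₀, hr0, hx0pos, funext fun i => by
    rw [heig i]; rfl, hsup⟩

lemma spec_iff (A : Matrix ι ι ℝ) (μ : ℂ) :
    μ ∈ spectrum ℂ (A.map fun x => (x : ℂ)) ↔
      ∃ v : ι → ℂ, v ≠ 0 ∧ (A.map fun x => (x : ℂ)).mulVec v = μ • v := by
  rw [spectrum.mem_iff, Algebra.algebraMap_eq_smul_one, Matrix.isUnit_iff_isUnit_det,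
    isUnit_iff_ne_zero, not_not, ← Matrix.exists_mulVec_eq_zero_iff]
  constructor
  · rintro ⟨v, hv, hveq⟩
    refine ⟨v, hv, ?_⟩
    rw [Matrix.sub_mulVec, Matrix.smul_mulVec, Matrix.one_mulVec, sub_eq_zero] at hveq
    exact hveq.symm
  · rintro ⟨v, hv, hveq⟩
    exact ⟨v, hv, by
      rw [Matrix.sub_mulVec, Matrix.smul_mulVec, Matrix.one_mulVec, hveq, sub_self]⟩

lemma abs_mem_le {A : Matrix ι ι ℝ} (hA : ∀ i j, 0 ≤ A i j) {r : ℝ}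
    (hsup : ∀ (θ : ℝ) (x : ι → ℝ), 0 ≤ θ → (∀ i, 0 ≤ x i) → x ≠ 0 →
      (∀ i, θ * x i ≤ A.mulVec x i) → θ ≤ r)
    {μ : ℂ} (hμ : μ ∈ spectrum ℂ (A.map fun x => (x : ℂ))) : ‖μ‖ ≤ r := by
  obtain ⟨v, hv, hveq⟩ := (spec_iff A μ).mp hμ
  set w : ι → ℝ := fun i => ‖v i‖ with hw
  have hw0 : ∀ i, 0 ≤ w i := fun i => norm_nonneg _
  have hwne : w ≠ 0 := by
    obtain ⟨i, hi⟩ : ∃ i, v i ≠ 0 := by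
      by_contra hall; push_neg at hall; exact hv (funext hall)
    intro hc
    have := congrFun hc i
    simp only [hw, Pi.zero_apply] at this
    exact hi (norm_eq_zero.mp this)
  refine hsup _ w (norm_nonneg μ) hw0 hwne fun i => ?_
  have hrow : (A.map fun x => (x : ℂ)).mulVec v i = ∑ j, (A i j : ℂ) * v j := rfl
  calc ‖μ‖ * w i = ‖μ * v i‖ := by rw [norm_mul]
    _ = ‖(A.map fun x => (x : ℂ)).mulVec v i‖ := by
        rw [hveq]; rfl
    _ = ‖∑ j, (A i j : ℂ) * v j‖ := by rw [hrow]
    _ ≤ ∑ j, ‖(A i j : ℂ) * v j‖ := norm_sum_le _ _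
    _ = ∑ j, A i j * w j := by
        refine Finset.sum_congr rfl fun j _ => ?_
        rw [norm_mul, Complex.norm_real, Real.norm_eq_abs, abs_of_nonneg (hA i j)]
    _ = A.mulVec w i := rfl

lemma real_eigen_mem {A : Matrix ι ι ℝ} {r : ℝ} {v : ι → ℝ} (hv : v ≠ 0)
    (heig : A.mulVec v = r • v) :
    (r : ℂ) ∈ spectrum ℂ (A.map fun x => (x : ℂ)) := by
  refine (spec_iff A r).mpr ⟨fun i => (v i : ℂ), ?_, ?_⟩
  · obtain ⟨i, hi⟩ : ∃ i, v i ≠ 0 := by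
      by_contra hall; push_neg at hall; exact hv (funext hall)
    intro hc
    have := congrFun hc i
    simp only [Pi.zero_apply, Complex.ofReal_eq_zero] at this
    exact hi this
  · funext i
    have h1 := congrFun heig i
    have h2 : A.mulVec v i = ∑ j, A i j * v j := rfl
    have h3 : (r • v) i = r * v i := rfl
    show (∑ j, (A i j : ℂ) * (v j : ℂ)) = (r : ℂ) • (v i : ℂ)
    have h4 : (∑ j, A i j * v j) = r * v i := by rw [← h2, h1, h3]
    rw [smul_eq_mul]
    have h5 : ((∑ j, A i j * v j : ℝ) : ℂ) = ∑ j, (A i j : ℂ) * (v j : ℂ) := by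
      push_cast; rfl
    rw [← h5, h4]
    push_cast
    rfl

lemma transpose_mem {A : Matrix ι ι ℝ} {μ : ℂ}
    (hμ : μ ∈ spectrum ℂ (Aᵀ.map fun x => (x : ℂ))) :
    μ ∈ spectrum ℂ (A.map fun x => (x : ℂ)) := by
  rw [spectrum.mem_iff] at hμ ⊢
  intro hcon
  apply hμ
  rw [Matrix.isUnit_iff_isUnit_det] at hcon ⊢
  have hT : (Aᵀ.map fun x => (x : ℂ)) = (A.map fun x => (x : ℂ))ᵀ := Matrix.transpose_map
  have halg : (algebraMap ℂ (Matrix ι ι ℂ)) μ - Aᵀ.map (fun x => (x : ℂ)) =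
      ((algebraMap ℂ (Matrix ι ι ℂ)) μ - A.map fun x => (x : ℂ))ᵀ := by
    rw [Matrix.transpose_sub, hT]
    congr 1
    rw [Algebra.algebraMap_eq_smul_one, Matrix.transpose_smul, Matrix.transpose_one]
  rw [halg, Matrix.det_transpose]
  exact hcon

lemma specRad_le_of_bound {A : Matrix ι ι ℝ} {r : ℝ} (hr0 : 0 ≤ r)
    (habs : ∀ μ ∈ spectrum ℂ (A.map fun x => (x : ℂ)), ‖μ‖ ≤ r) :
    specRad A ≤ r := by
  refine Real.sSup_le ?_ hr0
  rintro s ⟨μ, hμ, rfl⟩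
  exact habs μ hμ

lemma le_specRad_of_mem {A : Matrix ι ι ℝ} {r : ℝ} (hr0 : 0 ≤ r)
    (hmem : (r : ℂ) ∈ spectrum ℂ (A.map fun x => (x : ℂ)))
    (hbdd : BddAbove {s : ℝ | ∃ μ ∈ spectrum ℂ (A.map fun x => (x : ℂ)), s = ‖μ‖}) :
    r ≤ specRad A := by
  have habs : r = ‖((r : ℝ) : ℂ)‖ := by
    rw [Complex.norm_real, Real.norm_eq_abs, abs_of_nonneg hr0]
  exact le_csSup hbdd ⟨((r : ℝ) : ℂ), hmem, habs⟩

lemma specRad_bddAbove {A : Matrix ι ι ℝ} (hA : ∀ i j, 0 ≤ A i j) [Nonempty ι] :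
    BddAbove {s : ℝ | ∃ μ ∈ spectrum ℂ (A.map fun x => (x : ℂ)), s = ‖μ‖} := by
  obtain ⟨r₀, x₀, _, _, _, _, hsup⟩ := cw_max hA
  refine ⟨r₀, ?_⟩
  rintro s ⟨μ, hμ, rfl⟩
  exact abs_mem_le hA hsup hμ

lemma specRad_empty (A : Matrix ι ι ℝ) [IsEmpty ι] : specRad A = 0 := by
  have hsub : Subsingleton (Matrix ι ι ℂ) := ⟨fun a b => by ext i; exact isEmptyElim i⟩
  have hspec : spectrum ℂ (A.map fun x => (x : ℂ)) = ∅ := by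
    ext μ
    simp only [Set.mem_empty_iff_false, iff_false, spectrum.mem_iff, not_not]
    exact @isUnit_of_subsingleton _ _ hsub _
  unfold specRad
  rw [hspec]
  simp [Real.sSup_empty]

lemma pow_nonneg_le {M N : Matrix ι ι ℝ} (hM0 : ∀ i j, 0 ≤ M i j)
    (hMN : ∀ i j, M i j ≤ N i j) :
    ∀ k, (∀ i j, 0 ≤ (M ^ k) i j) ∧ (∀ i j, (M ^ k) i j ≤ (N ^ k) i j) := by
  intro k
  induction k with
  | zero =>
    constructor <;> intro i j <;> by_cases hij : i = j <;>
      simp [Matrix.one_apply, hij]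
  | succ k ih =>
    obtain ⟨ih0, ihle⟩ := ih
    constructor
    · intro i j
      rw [pow_succ, Matrix.mul_apply]
      exact Finset.sum_nonneg fun l _ => mul_nonneg (ih0 i l) (hM0 l j)
    · intro i j
      rw [pow_succ, pow_succ, Matrix.mul_apply, Matrix.mul_apply]
      refine Finset.sum_le_sum fun l _ => ?_
      exact mul_le_mul (ihle i l) (hMN l j) (hM0 l j) (le_trans (ih0 i l) (ihle i l))

lemma irred_of_le {M N : Matrix ι ι ℝ} (hM0 : ∀ i j, 0 ≤ M i j)
    (hMN : ∀ i j, M i j ≤ N i j) (hirr : Irred M) : Irred N := by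
  intro i j hij
  obtain ⟨k, hk⟩ := hirr i j hij
  obtain ⟨h0, hle⟩ := pow_nonneg_le hM0 hMN k
  exact ⟨k, by
    have h1 : 0 < (M ^ k) i j := lt_of_le_of_ne (h0 i j) (Ne.symm hk)
    exact ne_of_gt (lt_of_lt_of_le h1 (hle i j))⟩

lemma irred_smul {M : Matrix ι ι ℝ} {c : ℝ} (hc : c ≠ 0) (hirr : Irred M) :
    Irred (c • M) := by
  intro i j hij
  obtain ⟨k, hk⟩ := hirr i j hij
  refine ⟨k, ?_⟩
  rw [smul_pow]
  simp only [Matrix.smul_apply, smul_eq_mul]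
  exact mul_ne_zero (pow_ne_zero k hc) hk

lemma irred_transpose {M : Matrix ι ι ℝ} (hirr : Irred M) : Irred Mᵀ := by
  intro i j hij
  obtain ⟨k, hk⟩ := hirr j i (Ne.symm hij)
  refine ⟨k, ?_⟩
  rw [← Matrix.transpose_pow]
  exact hk

end PFaux

namespace SIWS

open PFaux

section Model

variable {n m : ℕ} {h wmax : ℝ} {δ : Fin n → ℝ} {δw : Fin m → ℝ}
  {B : Matrix (Fin n) (Fin n) ℝ} {Bw : Matrix (Fin n) (Fin m) ℝ}
  {Cw : Matrix (Fin m) (Fin n) ℝ}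

/-- Population-part diagonal of a state. -/
def zd {n m : ℕ} (z : SIdx n m → ℝ) : SIdx n m → ℝ :=
  Sum.elim (fun i => z (Sum.inl i)) fun _ => (0 : ℝ)

/-- Coordinatewise fixed-point equations. -/
def FixEq {n m : ℕ} (δ : Fin n → ℝ) (δw : Fin m → ℝ)
    (B : Matrix (Fin n) (Fin n) ℝ) (Bw : Matrix (Fin n) (Fin m) ℝ)
    (Cw : Matrix (Fin m) (Fin n) ℝ) (z : SIdx n m → ℝ) : Prop :=
  ∀ p, Sum.elim δ δw p * z p = (1 - zd z p) * ((BfM B Bw Cw).mulVec z p)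

lemma fix_iff (hh : h ≠ 0) (z : SIdx n m → ℝ) :
    step h (DfM δ δw) (BfM B Bw Cw) z = z ↔ FixEq δ δw B Bw Cw z := by
  have hV : ∀ p, ((DfM δ δw - (1 - Zm z) * BfM B Bw Cw).mulVec z) p
      = Sum.elim δ δw p * z p - (1 - zd z p) * ((BfM B Bw Cw).mulVec z p) := by
    intro p
    rw [Matrix.sub_mulVec]
    have h2 : (1 - Zm z : Matrix (SIdx n m) (SIdx n m) ℝ)
        = Matrix.diagonal (fun q => 1 - zd z q) := by
      rw [← Matrix.diagonal_one, Zm, Matrix.diagonal_sub]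
      rfl
    have h3 : ((1 - Zm z) * BfM B Bw Cw).mulVec z p
        = (1 - zd z p) * ((BfM B Bw Cw).mulVec z p) := by
      rw [← Matrix.mulVec_mulVec, h2, Matrix.mulVec_diagonal]
    have h1 : (DfM δ δw).mulVec z p = Sum.elim δ δw p * z p :=
      Matrix.mulVec_diagonal _ _ _
    simp only [Pi.sub_apply, h1, h3]
  constructor
  · intro hfix p
    have h0 : (h • ((DfM δ δw - (1 - Zm z) * BfM B Bw Cw).mulVec z)) = 0 := by
      have := sub_eq_self.mp hfix
      exact this
    have h1 : ((DfM δ δw - (1 - Zm z) * BfM B Bw Cw).mulVec z) = 0 :=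
      (smul_eq_zero.mp h0).resolve_left hh
    have h2 := congrFun h1 p
    rw [hV p] at h2
    simp only [Pi.zero_apply] at h2
    linarith
  · intro hfix
    rw [step]
    apply sub_eq_self.mpr
    rw [smul_eq_zero]
    right
    funext p
    rw [hV p]
    simp only [Pi.zero_apply]
    have := hfix p
    linarith

lemma bf_nonneg (hA1 : A1 h δ δw B Bw Cw wmax) :
    ∀ p q, 0 ≤ BfM B Bw Cw p q := by
  rintro (i | i) (j | j) <;> simp [BfM] <;>
    first
    | exact hA1.B_nonneg i j
    | exact hA1.Bw_nonneg i j
    | exact hA1.Cw_nonneg i j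

lemma dd_pos (hA1 : A1 h δ δw B Bw Cw wmax) :
    ∀ p, 0 < Sum.elim δ δw p := by
  rintro (i | j)
  · exact hA1.delta_pos i
  · exact hA1.deltaw_pos j

lemma bfv_nonneg (hA1 : A1 h δ δw B Bw Cw wmax) {z : SIdx n m → ℝ}
    (hz : ∀ p, 0 ≤ z p) (p : SIdx n m) : 0 ≤ (BfM B Bw Cw).mulVec z p :=
  mulVec_nonneg (bf_nonneg hA1) hz p

lemma bf_inr (z : SIdx n m → ℝ) (j : Fin m) :
    (BfM B Bw Cw).mulVec z (Sum.inr j) = ∑ k, Cw j k * z (Sum.inl k) := by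
  simp [BfM, Matrix.mulVec, dotProduct, Fintype.sum_sum_type]

lemma Am_apply (p q : SIdx n m) :
    (1 - h • DfM δ δw + h • BfM B Bw Cw) p q
      = (if p = q then 1 - h * Sum.elim δ δw p else 0) + h * BfM B Bw Cw p q := by
  simp only [Matrix.add_apply, Matrix.sub_apply, Matrix.smul_apply, smul_eq_mul,
    DfM, Matrix.diagonal_apply, Matrix.one_apply]
  by_cases hpq : p = q <;> simp [hpq] <;> ring

lemma Am_nonneg (hA1 : A1 h δ δw B Bw Cw wmax) :
    ∀ p q, 0 ≤ (1 - h • DfM δ δw + h • BfM B Bw Cw) p q := by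
  intro p q
  rw [Am_apply]
  have h1 : 0 ≤ h * BfM B Bw Cw p q := mul_nonneg hA1.h_pos.le (bf_nonneg hA1 p q)
  by_cases hpq : p = q
  · subst hpq
    rw [if_pos rfl]
    have h2 : h * Sum.elim δ δw p ≤ 1 := by
      rcases p with i | j
      · exact (hA1.h_delta i).2
      · exact (hA1.h_deltaw j).2
    linarith
  · simp only [if_neg hpq, zero_add]
    exact h1

lemma hbf_le_Am (hA1 : A1 h δ δw B Bw Cw wmax) :
    ∀ p q, (h • BfM B Bw Cw) p q ≤ (1 - h • DfM δ δw + h • BfM B Bw Cw) p q := by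
  intro p q
  rw [Am_apply]
  simp only [Matrix.smul_apply, smul_eq_mul]
  by_cases hpq : p = q
  · subst hpq
    rw [if_pos rfl]
    have h2 : h * Sum.elim δ δw p ≤ 1 := by
      rcases p with i | j
      · exact (hA1.h_delta i).2
      · exact (hA1.h_deltaw j).2
    linarith
  · simp [if_neg hpq]

lemma Am_irred (hA1 : A1 h δ δw B Bw Cw wmax) (hA2 : Irred (BfM B Bw Cw)) :
    Irred (1 - h • DfM δ δw + h • BfM B Bw Cw) := by
  have h1 : Irred (h • BfM B Bw Cw) := irred_smul (ne_of_gt hA1.h_pos) hA2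
  have h2 : ∀ p q, 0 ≤ (h • BfM B Bw Cw) p q := fun p q =>
    mul_nonneg hA1.h_pos.le (bf_nonneg hA1 p q)
  exact irred_of_le h2 (hbf_le_Am hA1) h1

lemma Am_mulVec (z : SIdx n m → ℝ) (p : SIdx n m) :
    (1 - h • DfM δ δw + h • BfM B Bw Cw).mulVec z p
      = z p - h * (Sum.elim δ δw p * z p) + h * ((BfM B Bw Cw).mulVec z p) := by
  rw [Matrix.add_mulVec, Matrix.sub_mulVec, Matrix.one_mulVec,
    Matrix.smul_mulVec, Matrix.smul_mulVec]
  simp only [Pi.add_apply, Pi.sub_apply, Pi.smul_apply, smul_eq_mul]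
  rw [show (DfM δ δw).mulVec z p = Sum.elim δ δw p * z p from Matrix.mulVec_diagonal _ _ _]

lemma Am_fix {z : SIdx n m → ℝ} (hfix : FixEq δ δw B Bw Cw z) (p : SIdx n m) :
    (1 - h • DfM δ δw + h • BfM B Bw Cw).mulVec z p
      = z p + h * (zd z p * ((BfM B Bw Cw).mulVec z p)) := by
  rw [Am_mulVec, hfix p]
  ring

/-- The normalized fixed-point map. -/
noncomputable def Phi {n m : ℕ} (δ : Fin n → ℝ) (δw : Fin m → ℝ)
    (B : Matrix (Fin n) (Fin n) ℝ) (Bw : Matrix (Fin n) (Fin m) ℝ)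
    (Cw : Matrix (Fin m) (Fin n) ℝ) (z : SIdx n m → ℝ) : SIdx n m → ℝ :=
  Sum.elim
    (fun i => (BfM B Bw Cw).mulVec z (Sum.inl i)
      / (δ i + (BfM B Bw Cw).mulVec z (Sum.inl i)))
    (fun j => (BfM B Bw Cw).mulVec z (Sum.inr j) / δw j)

lemma fixeq_iff_phi (hA1 : A1 h δ δw B Bw Cw wmax) {z : SIdx n m → ℝ}
    (hz : ∀ p, 0 ≤ z p) :
    FixEq δ δw B Bw Cw z ↔ Phi δ δw B Bw Cw z = z := by
  constructor
  · intro hfix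
    funext p
    rcases p with i | j
    · have hb : 0 ≤ (BfM B Bw Cw).mulVec z (Sum.inl i) := bfv_nonneg hA1 hz _
      have hden : 0 < δ i + (BfM B Bw Cw).mulVec z (Sum.inl i) := by
        have := hA1.delta_pos i; linarith
      have heq := hfix (Sum.inl i)
      simp only [Sum.elim_inl, zd] at heq
      show (BfM B Bw Cw).mulVec z (Sum.inl i)
          / (δ i + (BfM B Bw Cw).mulVec z (Sum.inl i)) = z (Sum.inl i)
      rw [div_eq_iff (ne_of_gt hden)]
      linarith [heq]
    · have heq := hfix (Sum.inr j)
      simp only [Sum.elim_inr, zd] at heq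
      show (BfM B Bw Cw).mulVec z (Sum.inr j) / δw j = z (Sum.inr j)
      rw [div_eq_iff (ne_of_gt (hA1.deltaw_pos j))]
      linarith [heq]
  · intro hphi p
    rcases p with i | j
    · have hb : 0 ≤ (BfM B Bw Cw).mulVec z (Sum.inl i) := bfv_nonneg hA1 hz _
      have hden : 0 < δ i + (BfM B Bw Cw).mulVec z (Sum.inl i) := by
        have := hA1.delta_pos i; linarith
      have heq := congrFun hphi (Sum.inl i)
      simp only [Phi, Sum.elim_inl] at heq
      rw [div_eq_iff (ne_of_gt hden)] at heq
      simp only [Sum.elim_inl, zd]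
      linarith [heq]
    · have heq := congrFun hphi (Sum.inr j)
      simp only [Phi, Sum.elim_inr] at heq
      rw [div_eq_iff (ne_of_gt (hA1.deltaw_pos j))] at heq
      simp only [Sum.elim_inr, zd]
      linarith [heq]

lemma phi_nonneg (hA1 : A1 h δ δw B Bw Cw wmax) {z : SIdx n m → ℝ}
    (hz : ∀ p, 0 ≤ z p) (p : SIdx n m) : 0 ≤ Phi δ δw B Bw Cw z p := by
  rcases p with i | j
  · have hb : 0 ≤ (BfM B Bw Cw).mulVec z (Sum.inl i) := bfv_nonneg hA1 hz _
    have := hA1.delta_pos i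
    exact div_nonneg hb (by linarith)
  · exact div_nonneg (bfv_nonneg hA1 hz _) (hA1.deltaw_pos j).le

lemma phi_mono (hA1 : A1 h δ δw B Bw Cw wmax) {z z' : SIdx n m → ℝ}
    (hz : ∀ p, 0 ≤ z p) (hzz' : ∀ p, z p ≤ z' p) (p : SIdx n m) :
    Phi δ δw B Bw Cw z p ≤ Phi δ δw B Bw Cw z' p := by
  have hz' : ∀ p, 0 ≤ z' p := fun p => le_trans (hz p) (hzz' p)
  have hmono : ∀ q, (BfM B Bw Cw).mulVec z q ≤ (BfM B Bw Cw).mulVec z' q :=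
    mulVec_mono (bf_nonneg hA1) hzz'
  rcases p with i | j
  · set b := (BfM B Bw Cw).mulVec z (Sum.inl i) with hbdef
    set b' := (BfM B Bw Cw).mulVec z' (Sum.inl i) with hb'def
    have hb : 0 ≤ b := bfv_nonneg hA1 hz _
    have hb' : 0 ≤ b' := bfv_nonneg hA1 hz' _
    have hbb' : b ≤ b' := hmono _
    have hδ := hA1.delta_pos i
    show b / (δ i + b) ≤ b' / (δ i + b')
    rw [div_le_div_iff₀ (by linarith) (by linarith)]
    nlinarith
  · have hδw := hA1.deltaw_pos j
    show (BfM B Bw Cw).mulVec z (Sum.inr j) / δw j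
        ≤ (BfM B Bw Cw).mulVec z' (Sum.inr j) / δw j
    gcongr
    exact hmono _

lemma phi_mapsD (hA1 : A1 h δ δw B Bw Cw wmax) {z : SIdx n m → ℝ}
    (hz : inD wmax z) : inD wmax (Phi δ δw B Bw Cw z) := by
  have hz0 : ∀ p, 0 ≤ z p := by
    rintro (i | j)
    · exact (hz.1 i).1
    · exact (hz.2 j).1
  constructor
  · intro i
    have hb : 0 ≤ (BfM B Bw Cw).mulVec z (Sum.inl i) := bfv_nonneg hA1 hz0 _
    have hδ := hA1.delta_pos i
    constructor
    · exact phi_nonneg hA1 hz0 _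
    · show (BfM B Bw Cw).mulVec z (Sum.inl i)
          / (δ i + (BfM B Bw Cw).mulVec z (Sum.inl i)) ≤ 1
      rw [div_le_one (by linarith)]
      linarith
  · intro j
    refine ⟨phi_nonneg hA1 hz0 _, ?_⟩
    show (BfM B Bw Cw).mulVec z (Sum.inr j) / δw j ≤ wmax
    have hδw := hA1.deltaw_pos j
    have h1 : (BfM B Bw Cw).mulVec z (Sum.inr j) ≤ ∑ k, Cw j k := by
      rw [bf_inr]
      refine Finset.sum_le_sum fun k _ => ?_
      calc Cw j k * z (Sum.inl k) ≤ Cw j k * 1 :=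
            mul_le_mul_of_nonneg_left (hz.1 k).2 (hA1.Cw_nonneg j k)
        _ = Cw j k := mul_one _
    have h2 := (hA1.ratio_mem j).2
    calc (BfM B Bw Cw).mulVec z (Sum.inr j) / δw j ≤ (∑ k, Cw j k) / δw j := by
          gcongr
      _ ≤ wmax := h2

lemma fixeq_pos (hA1 : A1 h δ δw B Bw Cw wmax) (hA2 : Irred (BfM B Bw Cw))
    {z : SIdx n m → ℝ} (hz0 : ∀ p, 0 ≤ z p) (hfix : FixEq δ δw B Bw Cw z)
    (hne : z ≠ 0) : ∀ p, 0 < z p := by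
  classical
  set S : Finset (SIdx n m) := Finset.univ.filter (fun p => 0 < z p) with hS
  have hSne : S.Nonempty := by
    obtain ⟨p, hp⟩ : ∃ p, z p ≠ 0 := by
      by_contra hall; push_neg at hall; exact hne (funext hall)
    exact ⟨p, Finset.mem_filter.mpr ⟨Finset.mem_univ p,
      lt_of_le_of_ne (hz0 p) (Ne.symm hp)⟩⟩
  have hSuniv : S = Finset.univ := by
    by_contra hSU
    obtain ⟨p, hp, q, hq, hpq⟩ := irred_escape (bf_nonneg hA1) hA2 hSne hSU
    have hzp : z p = 0 := by
      by_contra hc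
      exact hp (Finset.mem_filter.mpr ⟨Finset.mem_univ p,
        lt_of_le_of_ne (hz0 p) (Ne.symm hc)⟩)
    have hzq : 0 < z q := (Finset.mem_filter.mp hq).2
    have hzd : zd z p = 0 := by
      rcases p with i | j
      · show z (Sum.inl i) = 0; exact hzp
      · rfl
    have heq := hfix p
    rw [hzp, hzd, mul_zero, sub_zero, one_mul] at heq
    have hbpos : 0 < (BfM B Bw Cw).mulVec z p := by
      have h1 : BfM B Bw Cw p q * z q ≤ (BfM B Bw Cw).mulVec z p := by
        rw [PFaux.mulVec_eq_sum]
        exact Finset.single_le_sum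
          (fun l _ => mul_nonneg (bf_nonneg hA1 p l) (hz0 l)) (Finset.mem_univ q)
      exact lt_of_lt_of_le (mul_pos hpq hzq) h1
    rw [← heq] at hbpos
    exact lt_irrefl _ hbpos
  intro p
  have : p ∈ S := hSuniv ▸ Finset.mem_univ p
  exact (Finset.mem_filter.mp this).2

lemma bf_of_eigen (hh : h ≠ 0) {r : ℝ} {v : SIdx n m → ℝ}
    (heig : (1 - h • DfM δ δw + h • BfM B Bw Cw).mulVec v = r • v) (p : SIdx n m) :
    (BfM B Bw Cw).mulVec v p = ((r - 1) / h + Sum.elim δ δw p) * v p := by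
  have h1 := congrFun heig p
  rw [Am_mulVec] at h1
  have h2 : (r • v) p = r * v p := rfl
  rw [h2] at h1
  field_simp
  nlinarith [h1]

set_option maxHeartbeats 2000000 in
lemma exists_endemic (hA1 : A1 h δ δw B Bw Cw wmax) (hA2 : Irred (BfM B Bw Cw))
    (hρ : 1 < specRad (1 - h • DfM δ δw + h • BfM B Bw Cw)) :
    ∃ zstar : SIdx n m → ℝ, inD wmax zstar ∧ (∀ p, 0 < zstar p) ∧
      FixEq δ δw B Bw Cw zstar ∧
      ∀ y : SIdx n m → ℝ, inD wmax y → FixEq δ δw B Bw Cw y → y ≠ 0 → y = zstar := by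
  classical
  have hh : h ≠ 0 := ne_of_gt hA1.h_pos
  -- the index type is nonempty
  have hnem : Nonempty (SIdx n m) := by
    by_contra hc
    rw [not_nonempty_iff] at hc
    have h0 := @specRad_empty _ _ _ (1 - h • DfM δ δw + h • BfM B Bw Cw) hc
    rw [h0] at hρ
    linarith
  -- Perron-Frobenius eigenpair
  obtain ⟨r, v, hr0, hvpos, heig, hsup⟩ := cw_eigen (Am_nonneg hA1) (Am_irred hA1 hA2)
  have hrρ : specRad (1 - h • DfM δ δw + h • BfM B Bw Cw) ≤ r :=
    specRad_le_of_bound hr0 fun μ hμ => abs_mem_le (Am_nonneg hA1) hsup hμ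
  have hr1 : 1 < r := lt_of_lt_of_le hρ hrρ
  set c : ℝ := (r - 1) / h with hc
  have hcpos : 0 < c := div_pos (by linarith) hA1.h_pos
  have hbfv : ∀ p, (BfM B Bw Cw).mulVec v p = (c + Sum.elim δ δw p) * v p := by
    intro p
    rw [bf_of_eigen hh heig p, hc]
  -- choose the small multiple ε of the eigenvector
  set g : SIdx n m → ℝ :=
    Sum.elim (fun i => min (c / (c + δ i)) 1) (fun _ => wmax) with hg
  have hgpos : ∀ p, 0 < g p := by
    rintro (i | j)
    · have := hA1.delta_pos i
      exact lt_min (div_pos hcpos (by linarith)) one_pos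
    · exact hA1.wmax_pos
  obtain ⟨p₀, -, hminp⟩ := Finset.exists_min_image Finset.univ
    (fun p => g p / v p) Finset.univ_nonempty
  set ε : ℝ := g p₀ / v p₀ with hε
  have hεpos : 0 < ε := div_pos (hgpos p₀) (hvpos p₀)
  have hεv : ∀ p, ε * v p ≤ g p := by
    intro p
    have h1 : ε ≤ g p / v p := hminp p (Finset.mem_univ p)
    exact (le_div_iff₀ (hvpos p)).mp h1
  set u : SIdx n m → ℝ := fun p => ε * v p with hu
  have hupos : ∀ p, 0 < u p := fun p => mul_pos hεpos (hvpos p)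
  have hbfu : ∀ p, (BfM B Bw Cw).mulVec u p = ε * ((c + Sum.elim δ δw p) * v p) := by
    intro p
    have h1 : u = ε • v := rfl
    rw [h1, Matrix.mulVec_smul]
    simp only [Pi.smul_apply, smul_eq_mul, hbfv p]
  -- u is a subsolution: u ≤ Phi u
  have hPhiu : ∀ p, u p ≤ Phi δ δw B Bw Cw u p := by
    rintro (i | j)
    · set t : ℝ := ε * v (Sum.inl i) with ht
      have htpos : 0 < t := hupos _
      have hδ := hA1.delta_pos i
      have htc : t * (c + δ i) ≤ c := by
        have h1 : t ≤ c / (c + δ i) :=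
          le_trans (hεv (Sum.inl i)) (min_le_left _ _)
        exact (le_div_iff₀ (by linarith)).mp h1
      have hbu : (BfM B Bw Cw).mulVec u (Sum.inl i) = t * (c + δ i) := by
        rw [hbfu (Sum.inl i)]
        simp only [Sum.elim_inl]
        ring
      show u (Sum.inl i) ≤ (BfM B Bw Cw).mulVec u (Sum.inl i)
        / (δ i + (BfM B Bw Cw).mulVec u (Sum.inl i))
      rw [hbu]
      have hden : 0 < δ i + t * (c + δ i) := by nlinarith
      rw [le_div_iff₀ hden]
      have hut : u (Sum.inl i) = t := rfl
      rw [hut]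
      nlinarith
    · set t : ℝ := ε * v (Sum.inr j) with ht
      have htpos : 0 < t := hupos _
      have hδw := hA1.deltaw_pos j
      have hbu : (BfM B Bw Cw).mulVec u (Sum.inr j) = t * (c + δw j) := by
        rw [hbfu (Sum.inr j)]
        simp only [Sum.elim_inr]
        ring
      show u (Sum.inr j) ≤ (BfM B Bw Cw).mulVec u (Sum.inr j) / δw j
      rw [hbu, le_div_iff₀ hδw]
      have hut : u (Sum.inr j) = t := rfl
      rw [hut]
      nlinarith
  -- the maximal state
  set zmax : SIdx n m → ℝ := Sum.elim (fun _ => 1) (fun _ => wmax) with hzmax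
  have hzmaxD : inD wmax zmax := by
    constructor
    · intro i; exact ⟨zero_le_one, le_refl _⟩
    · intro j; exact ⟨hA1.wmax_pos.le, le_refl _⟩
  have hule : ∀ p, u p ≤ zmax p := by
    rintro (i | j)
    · exact le_trans (hεv (Sum.inl i)) (min_le_right _ _)
    · exact hεv (Sum.inr j)
  -- iterate Phi from the top
  set zseq : ℕ → (SIdx n m → ℝ) := fun k => (Phi δ δw B Bw Cw)^[k] zmax with hzseq
  have hz0 : zseq 0 = zmax := rfl
  have hsucc : ∀ k, zseq (k + 1) = Phi δ δw B Bw Cw (zseq k) := fun k =>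
    Function.iterate_succ_apply' _ _ _
  have hD : ∀ k, inD wmax (zseq k) := by
    intro k
    induction k with
    | zero => exact hzmaxD
    | succ k ih => rw [hsucc]; exact phi_mapsD hA1 ih
  have hnonneg : ∀ k p, 0 ≤ zseq k p := by
    intro k
    rintro (i | j)
    · exact ((hD k).1 i).1
    · exact ((hD k).2 j).1
  have hdec : ∀ k p, zseq (k + 1) p ≤ zseq k p := by
    intro k
    induction k with
    | zero =>
      rintro (i | j)
      · rw [hsucc 0, hz0]
        exact ((phi_mapsD hA1 hzmaxD).1 i).2
      · rw [hsucc 0, hz0]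
        exact ((phi_mapsD hA1 hzmaxD).2 j).2
    | succ k ih =>
      intro p
      rw [hsucc (k + 1)]
      calc Phi δ δw B Bw Cw (zseq (k + 1)) p ≤ Phi δ δw B Bw Cw (zseq k) p :=
            phi_mono hA1 (hnonneg (k + 1)) ih p
        _ = zseq (k + 1) p := (congrFun (hsucc k) p).symm
  have huk : ∀ k p, u p ≤ zseq k p := by
    intro k
    induction k with
    | zero => exact hule
    | succ k ih =>
      intro p
      rw [hsucc k]
      calc u p ≤ Phi δ δw B Bw Cw u p := hPhiu p
        _ ≤ Phi δ δw B Bw Cw (zseq k) p := phi_mono hA1 (fun q => (hupos q).le) ih p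
  -- the limit
  set zhat : SIdx n m → ℝ := fun p => ⨅ k, zseq k p with hzhat
  have hbddp : ∀ p, BddBelow (Set.range fun k => zseq k p) := by
    intro p
    exact ⟨0, by rintro x ⟨k, rfl⟩; exact hnonneg k p⟩
  have htend : ∀ p, Tendsto (fun k => zseq k p) atTop (nhds (zhat p)) := by
    intro p
    exact tendsto_atTop_ciInf (antitone_nat_of_succ_le fun k => hdec k p) (hbddp p)
  have hzhat_le : ∀ k p, zhat p ≤ zseq k p := fun k p => ciInf_le (hbddp p) k
  have hzhat_ge_u : ∀ p, u p ≤ zhat p := fun p => le_ciInf fun k => huk k p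
  have hzhatpos : ∀ p, 0 < zhat p := fun p => lt_of_lt_of_le (hupos p) (hzhat_ge_u p)
  have hzhat0 : ∀ p, 0 ≤ zhat p := fun p => (hzhatpos p).le
  -- the limit is a fixed point of Phi
  have hbtend : ∀ q, Tendsto (fun k => (BfM B Bw Cw).mulVec (zseq k) q) atTop
      (nhds ((BfM B Bw Cw).mulVec zhat q)) := by
    intro q
    have h1 : (fun k => (BfM B Bw Cw).mulVec (zseq k) q)
        = fun k => ∑ j, BfM B Bw Cw q j * zseq k j := rfl
    have h2 : (BfM B Bw Cw).mulVec zhat q = ∑ j, BfM B Bw Cw q j * zhat j := rfl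
    rw [h1, h2]
    exact tendsto_finset_sum _ fun j _ => (htend j).const_mul _
  have hphihat : Phi δ δw B Bw Cw zhat = zhat := by
    funext p
    have T1 : Tendsto (fun k => zseq (k + 1) p) atTop (nhds (zhat p)) :=
      (htend p).comp (tendsto_add_atTop_nat 1)
    have hfun : (fun k => zseq (k + 1) p) = fun k => Phi δ δw B Bw Cw (zseq k) p := by
      funext k; rw [hsucc k]
    rw [hfun] at T1
    have T2 : Tendsto (fun k => Phi δ δw B Bw Cw (zseq k) p) atTop
        (nhds (Phi δ δw B Bw Cw zhat p)) := by
      rcases p with i | j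
      · have hbz : 0 ≤ (BfM B Bw Cw).mulVec zhat (Sum.inl i) := bfv_nonneg hA1 hzhat0 _
        have hden : δ i + (BfM B Bw Cw).mulVec zhat (Sum.inl i) ≠ 0 := by
          have := hA1.delta_pos i; positivity
        have := Tendsto.div (hbtend (Sum.inl i))
          (Tendsto.add tendsto_const_nhds (hbtend (Sum.inl i))) hden
        exact this
      · exact Tendsto.div_const (hbtend (Sum.inr j)) _
    exact tendsto_nhds_unique T2 T1
  have hfixhat : FixEq δ δw B Bw Cw zhat := (fixeq_iff_phi hA1 hzhat0).mpr hphihat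
  have hzhatD : inD wmax zhat := by
    constructor
    · intro i
      exact ⟨hzhat0 _, le_trans (hzhat_le 0 (Sum.inl i)) (le_refl _)⟩
    · intro j
      exact ⟨hzhat0 _, le_trans (hzhat_le 0 (Sum.inr j)) (le_refl _)⟩
  refine ⟨zhat, hzhatD, hzhatpos, hfixhat, ?_⟩
  -- uniqueness
  intro y hyD hyfix hyne
  have hy0 : ∀ p, 0 ≤ y p := by
    rintro (i | j)
    · exact (hyD.1 i).1
    · exact (hyD.2 j).1
  have hyphi : Phi δ δw B Bw Cw y = y := (fixeq_iff_phi hA1 hy0).mp hyfix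
  have hypos : ∀ p, 0 < y p := fixeq_pos hA1 hA2 hy0 hyfix hyne
  have hylek : ∀ k p, y p ≤ zseq k p := by
    intro k
    induction k with
    | zero =>
      rintro (i | j)
      · exact (hyD.1 i).2
      · exact (hyD.2 j).2
    | succ k ih =>
      intro p
      rw [hsucc k]
      calc y p = Phi δ δw B Bw Cw y p := (congrFun hyphi p).symm
        _ ≤ Phi δ δw B Bw Cw (zseq k) p := phi_mono hA1 hy0 ih p
  have hyle : ∀ p, y p ≤ zhat p := fun p => le_ciInf fun k => hylek k p
  obtain ⟨p₁, -, hminθ⟩ := Finset.exists_min_image Finset.univ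
    (fun p => y p / zhat p) Finset.univ_nonempty
  set θ : ℝ := y p₁ / zhat p₁ with hθ
  have hθpos : 0 < θ := div_pos (hypos p₁) (hzhatpos p₁)
  have hθle : ∀ p, θ * zhat p ≤ y p := by
    intro p
    exact (le_div_iff₀ (hzhatpos p)).mp (hminθ p (Finset.mem_univ p))
  by_cases hθ1 : 1 ≤ θ
  · funext p
    refine le_antisymm (hyle p) ?_
    calc zhat p = 1 * zhat p := (one_mul _).symm
      _ ≤ θ * zhat p := mul_le_mul_of_nonneg_right hθ1 (hzhat0 p)
      _ ≤ y p := hθle p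
  · exfalso
    push_neg at hθ1
    have hstrict_inl : ∀ i : Fin n, θ * zhat (Sum.inl i) < y (Sum.inl i) := by
      intro i
      set bz : ℝ := (BfM B Bw Cw).mulVec zhat (Sum.inl i) with hbz
      set byy : ℝ := (BfM B Bw Cw).mulVec y (Sum.inl i) with hbyy
      have hδ := hA1.delta_pos i
      have hbz0 : 0 ≤ bz := bfv_nonneg hA1 hzhat0 _
      have hzi : zhat (Sum.inl i) = bz / (δ i + bz) := (congrFun hphihat (Sum.inl i)).symm
      have hbzpos : 0 < bz := by
        rcases lt_or_eq_of_le hbz0 with hlt | heq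
        · exact hlt
        · exfalso
          have := hzhatpos (Sum.inl i)
          rw [hzi, ← heq] at this
          simp at this
      have hyi : y (Sum.inl i) = byy / (δ i + byy) := (congrFun hyphi (Sum.inl i)).symm
      have hby0 : 0 ≤ byy := bfv_nonneg hA1 hy0 _
      have hbyge : θ * bz ≤ byy := by
        have h1 : (BfM B Bw Cw).mulVec (fun p => θ * zhat p) (Sum.inl i) = θ * bz := by
          have h2 : (fun p => θ * zhat p) = θ • zhat := rfl
          rw [h2, Matrix.mulVec_smul]
          rfl
        calc θ * bz = (BfM B Bw Cw).mulVec (fun p => θ * zhat p) (Sum.inl i) := h1.symm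
          _ ≤ byy := mulVec_mono (bf_nonneg hA1) hθle _
      have hpos : 0 < θ * bz := mul_pos hθpos hbzpos
      have hd0 : 0 < δ i + bz := by linarith
      have hd1 : 0 < δ i + θ * bz := by linarith
      have hd2 : 0 < δ i + byy := by linarith
      have step1 : θ * zhat (Sum.inl i) < (θ * bz) / (δ i + θ * bz) := by
        have hθbz : θ * bz < bz := by nlinarith
        rw [hzi, ← mul_div_assoc, div_lt_div_iff₀ hd0 hd1]
        nlinarith [mul_lt_mul_of_pos_left hθbz hpos]
      have step2 : (θ * bz) / (δ i + θ * bz) ≤ byy / (δ i + byy) := by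
        rw [div_le_div_iff₀ hd1 hd2]
        nlinarith [mul_le_mul_of_nonneg_right hbyge hδ.le, mul_le_mul_of_nonneg_left hbyge hpos.le]
      rw [hyi]
      exact lt_of_lt_of_le step1 step2
    have hstrict : ∀ p, θ * zhat p < y p := by
      rintro (i | j)
      · exact hstrict_inl i
      · have hδw := hA1.deltaw_pos j
        set bzr : ℝ := (BfM B Bw Cw).mulVec zhat (Sum.inr j) with hbzr
        set byr : ℝ := (BfM B Bw Cw).mulVec y (Sum.inr j) with hbyr
        have hzj : zhat (Sum.inr j) = bzr / δw j := (congrFun hphihat (Sum.inr j)).symm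
        have hyj : y (Sum.inr j) = byr / δw j := (congrFun hyphi (Sum.inr j)).symm
        obtain ⟨k₀, hk₀⟩ := hA1.Cw_row_pos j
        have hsum : θ * bzr < byr := by
          rw [hbzr, hbyr, bf_inr, bf_inr, Finset.mul_sum]
          refine Finset.sum_lt_sum (fun k _ => ?_) ⟨k₀, Finset.mem_univ k₀, ?_⟩
          · calc θ * (Cw j k * zhat (Sum.inl k)) = Cw j k * (θ * zhat (Sum.inl k)) := by ring
              _ ≤ Cw j k * y (Sum.inl k) :=
                mul_le_mul_of_nonneg_left (hθle _) (hA1.Cw_nonneg j k)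
          · calc θ * (Cw j k₀ * zhat (Sum.inl k₀))
                = Cw j k₀ * (θ * zhat (Sum.inl k₀)) := by ring
              _ < Cw j k₀ * y (Sum.inl k₀) :=
                mul_lt_mul_of_pos_left (hstrict_inl k₀) hk₀
        rw [hzj, hyj, ← mul_div_assoc, div_lt_div_iff₀ hδw hδw]
        nlinarith [hsum]
    have hcontr : y p₁ = θ * zhat p₁ := by
      rw [hθ, div_mul_cancel₀ _ (ne_of_gt (hzhatpos p₁))]
    have := hstrict p₁
    rw [← hcontr] at this
    exact lt_irrefl _ this

set_option maxHeartbeats 2000000 in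
lemma specRad_gt_of_fixed (hA1 : A1 h δ δw B Bw Cw wmax) (hA2 : Irred (BfM B Bw Cw))
    {y : SIdx n m → ℝ} (hyD : inD wmax y) (hyfix : FixEq δ δw B Bw Cw y)
    (hyne : y ≠ 0) : 1 < specRad (1 - h • DfM δ δw + h • BfM B Bw Cw) := by
  classical
  have hy0 : ∀ p, 0 ≤ y p := by
    rintro (i | j)
    · exact (hyD.1 i).1
    · exact (hyD.2 j).1
  have hypos : ∀ p, 0 < y p := fixeq_pos hA1 hA2 hy0 hyfix hyne
  obtain ⟨pw, hpw⟩ : ∃ p, y p ≠ 0 := by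
    by_contra hall; push_neg at hall; exact hyne (funext hall)
  have hnem : Nonempty (SIdx n m) := ⟨pw⟩
  have hnFin : Nonempty (Fin n) := by
    rcases pw with i | j
    · exact ⟨i⟩
    · obtain ⟨k, -⟩ := hA1.Cw_row_pos j
      exact ⟨k⟩
  obtain ⟨i0⟩ := hnFin
  -- the infection pressure at node i0 is positive
  have hb0 : 0 < (BfM B Bw Cw).mulVec y (Sum.inl i0) := by
    have heq := hyfix (Sum.inl i0)
    simp only [Sum.elim_inl, zd] at heq
    have hl : 0 < δ i0 * y (Sum.inl i0) := mul_pos (hA1.delta_pos i0) (hypos _)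
    have hb0' : 0 ≤ (BfM B Bw Cw).mulVec y (Sum.inl i0) := bfv_nonneg hA1 hy0 _
    rcases lt_or_eq_of_le hb0' with hlt | heqb
    · exact hlt
    · exfalso
      rw [← heqb, mul_zero] at heq
      linarith
  -- left Perron eigenvector
  obtain ⟨r', u, hr'0, hupos, heigT, -⟩ :=
    cw_eigen (fun p q => Am_nonneg hA1 q p)
      (irred_transpose (Am_irred hA1 hA2))
  set Am : Matrix (SIdx n m) (SIdx n m) ℝ := 1 - h • DfM δ δw + h • BfM B Bw Cw with hAm
  set s : ℝ := ∑ p, u p * y p with hs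
  have hspos : 0 < s :=
    Finset.sum_pos (fun p _ => mul_pos (hupos p) (hypos p)) Finset.univ_nonempty
  have hdot1 : ∑ p, u p * (Am.mulVec y p) = r' * s := by
    have e1 : ∑ p, u p * (Am.mulVec y p) = dotProduct u (Am.mulVec y) := rfl
    have e2 : dotProduct u (Am.mulVec y)
        = dotProduct (Matrix.vecMul u Am) y := Matrix.dotProduct_mulVec u Am y
    have e3 : Matrix.vecMul u Am = Amᵀ.mulVec u := (Matrix.mulVec_transpose Am u).symm
    have e4 : Amᵀ.mulVec u = r' • u := heigT
    rw [e1, e2, e3, e4]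
    have e5 : dotProduct (r' • u) y = r' * dotProduct u y :=
      smul_dotProduct r' u y
    rw [e5]
    rfl
  have hdot2 : s < ∑ p, u p * (Am.mulVec y p) := by
    have e1 : ∀ p, u p * (Am.mulVec y p)
        = u p * y p + u p * (h * (zd y p * ((BfM B Bw Cw).mulVec y p))) := by
      intro p
      rw [Am_fix hyfix p]
      ring
    have e2 : ∑ p, u p * (Am.mulVec y p)
        = s + ∑ p, u p * (h * (zd y p * ((BfM B Bw Cw).mulVec y p))) := by
      rw [hs, ← Finset.sum_add_distrib]
      exact Finset.sum_congr rfl fun p _ => e1 p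
    rw [e2]
    have hterm : ∀ p, 0 ≤ u p * (h * (zd y p * ((BfM B Bw Cw).mulVec y p))) := by
      intro p
      have hzd : 0 ≤ zd y p := by
        rcases p with i | j
        · exact hy0 (Sum.inl i)
        · exact le_refl 0
      exact mul_nonneg (hupos p).le (mul_nonneg hA1.h_pos.le
        (mul_nonneg hzd (bfv_nonneg hA1 hy0 p)))
    have hterm0 : 0 < u (Sum.inl i0)
        * (h * (zd y (Sum.inl i0) * ((BfM B Bw Cw).mulVec y (Sum.inl i0)))) := by
      have hzd : zd y (Sum.inl i0) = y (Sum.inl i0) := rfl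
      rw [hzd]
      exact mul_pos (hupos _) (mul_pos hA1.h_pos (mul_pos (hypos _) hb0))
    have : 0 < ∑ p, u p * (h * (zd y p * ((BfM B Bw Cw).mulVec y p))) :=
      Finset.sum_pos' (fun p _ => hterm p) ⟨Sum.inl i0, Finset.mem_univ _, hterm0⟩
    linarith
  have hr'1 : 1 < r' := by
    have h1 : s < r' * s := lt_of_lt_of_le hdot2 (le_of_eq hdot1)
    nlinarith
  -- r' belongs to the spectrum of Am
  have hune : u ≠ 0 := by
    intro hc
    have := congrFun hc (Classical.arbitrary _)
    simp only [Pi.zero_apply] at this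
    exact absurd this (ne_of_gt (hupos _))
  have hmemT : ((r' : ℝ) : ℂ) ∈ spectrum ℂ ((Amᵀ).map fun x => (x : ℂ)) :=
    real_eigen_mem hune heigT
  have hmem : ((r' : ℝ) : ℂ) ∈ spectrum ℂ (Am.map fun x => (x : ℂ)) :=
    transpose_mem hmemT
  have hle : r' ≤ specRad Am :=
    le_specRad_of_mem hr'0 hmem (specRad_bddAbove (by rw [hAm]; exact Am_nonneg hA1))
  rw [hAm] at hle
  linarith

end Model

end SIWS

/-- if `ρ(I − hD_f + hB_f) > 1` the model has exactly two equilibria in `D`,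
the healthy state and a strictly positive endemic equilibrium; and the healthy state is the
unique equilibrium in `D` iff `ρ(I − hD_f + hB_f) ≤ 1`. -/
theorem stmt3 {n m : ℕ} (h wmax : ℝ) (δ : Fin n → ℝ) (δw : Fin m → ℝ)
    (B : Matrix (Fin n) (Fin n) ℝ) (Bw : Matrix (Fin n) (Fin m) ℝ)
    (Cw : Matrix (Fin m) (Fin n) ℝ)
    (hA1 : A1 h δ δw B Bw Cw wmax)
    (hA2 : Irred (BfM B Bw Cw)) :
    (1 < specRad (1 - h • DfM δ δw + h • BfM B Bw Cw) →
      ∃ zstar : SIdx n m → ℝ, inD wmax zstar ∧ (∀ p, 0 < zstar p) ∧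
        step h (DfM δ δw) (BfM B Bw Cw) zstar = zstar ∧
        ∀ y : SIdx n m → ℝ, inD wmax y → step h (DfM δ δw) (BfM B Bw Cw) y = y →
          y = 0 ∨ y = zstar) ∧
    ((∀ y : SIdx n m → ℝ, inD wmax y → step h (DfM δ δw) (BfM B Bw Cw) y = y → y = 0) ↔
      specRad (1 - h • DfM δ δw + h • BfM B Bw Cw) ≤ 1) := by
  have hh : h ≠ 0 := ne_of_gt hA1.h_pos
  constructor
  · intro hρ
    obtain ⟨zstar, hD, hpos, hfix, huniq⟩ := SIWS.exists_endemic hA1 hA2 hρ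
    refine ⟨zstar, hD, hpos, (SIWS.fix_iff hh zstar).mpr hfix, ?_⟩
    intro y hyD hyfix
    by_cases hy0 : y = 0
    · exact Or.inl hy0
    · exact Or.inr (huniq y hyD ((SIWS.fix_iff hh y).mp hyfix) hy0)
  · constructor
    · intro hall
      by_contra hgt
      push_neg at hgt
      obtain ⟨zstar, hD, hpos, hfix, -⟩ := SIWS.exists_endemic hA1 hA2 hgt
      have hz0 := hall zstar hD ((SIWS.fix_iff hh zstar).mpr hfix)
      have hnem : Nonempty (SIdx n m) := by
        by_contra hc
        rw [not_nonempty_iff] at hc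
        have h0 := @PFaux.specRad_empty _ _ _ (1 - h • DfM δ δw + h • BfM B Bw Cw) hc
        rw [h0] at hgt
        linarith
      obtain ⟨p⟩ := hnem
      have hp := hpos p
      rw [hz0] at hp
      simp at hp
    · intro hle y hyD hyfix
      by_contra hy0
      have := SIWS.specRad_gt_of_fixed hA1 hA2 hyD ((SIWS.fix_iff hh y).mp hyfix) hy0
      linarith
end

section
/- Consider the time-invariant single-virus layered SIWS model under Assumptions A1 and A2. The Jacobian matrix of the update map z ↦ z − h(D_f − (I − Z)B_f)z at the healthy state z = 0 equals I − hD_f + hB_f. Consequently, if the basic reproduction number satisfies ρ(D_f^{−1}B_f) ≤ 1, then ρ(I − hD_f + hB_f) ≤ 1 and the healthy state is locally exponentially stable with convergence rate ρ(I − hD_f + hB_f): there exist ε > 0 and c > 0 such that every solution with z(0) ∈ D and ‖z(0)‖ ≤ ε satisfies ‖z(t)‖ ≤ c·ρ(I − hD_f + hB_f)^t·‖z(0)‖ for all t ≥ 0. -/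
open Matrix Filter

set_option maxHeartbeats 2000000

namespace SIWS

variable {ι : Type} [Fintype ι] [DecidableEq ι]

lemma pow_entry_nonneg {A : Matrix ι ι ℝ} (hA : ∀ i j, 0 ≤ A i j) (k : ℕ) :
    ∀ i j, 0 ≤ (A ^ k) i j := by
  induction k with
  | zero => intro i j; rw [pow_zero]; by_cases h : i = j <;> simp [Matrix.one_apply, h]
  | succ k ih =>
      intro i j
      rw [pow_succ, Matrix.mul_apply]
      exact Finset.sum_nonneg fun l _ => mul_nonneg (ih i l) (hA l j)

lemma pow_entry_le {A C : Matrix ι ι ℝ} (hA : ∀ i j, 0 ≤ A i j)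
    (hAC : ∀ i j, A i j ≤ C i j) (k : ℕ) : ∀ i j, (A ^ k) i j ≤ (C ^ k) i j := by
  induction k with
  | zero => intro i j; simp
  | succ k ih =>
      intro i j
      rw [pow_succ, pow_succ, Matrix.mul_apply, Matrix.mul_apply]
      refine Finset.sum_le_sum fun l _ => mul_le_mul (ih i l) (hAC l j) (hA l j) ?_
      exact pow_entry_nonneg (fun i j => (hA i j).trans (hAC i j)) k i l

lemma irred_of_le {A C : Matrix ι ι ℝ} (hA : ∀ i j, 0 ≤ A i j)
    (hAC : ∀ i j, A i j ≤ C i j) (h : Irred A) : Irred C := by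
  intro i j hij
  obtain ⟨k, hk⟩ := h i j hij
  exact ⟨k, fun h0 => hk (le_antisymm (h0 ▸ pow_entry_le hA hAC k i j)
    (pow_entry_nonneg hA k i j))⟩

lemma irred_smul {A : Matrix ι ι ℝ} {c : ℝ} (hc : c ≠ 0) (h : Irred A) : Irred (c • A) := by
  intro i j hij
  obtain ⟨k, hk⟩ := h i j hij
  refine ⟨k, ?_⟩
  rw [smul_pow, Matrix.smul_apply, smul_eq_mul]
  exact mul_ne_zero (pow_ne_zero _ hc) hk

lemma irred_transpose {A : Matrix ι ι ℝ} (h : Irred A) : Irred Aᵀ := by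
  intro i j hij
  obtain ⟨k, hk⟩ := h j i (Ne.symm hij)
  refine ⟨k, ?_⟩
  rw [← Matrix.transpose_pow]
  simpa [Matrix.transpose_apply] using hk

lemma mem_spectrum_iff_eig {μ : ℂ} {A : Matrix ι ι ℂ} :
    μ ∈ spectrum ℂ A ↔ ∃ w, w ≠ 0 ∧ A *ᵥ w = μ • w := by
  rw [spectrum.mem_iff, Matrix.isUnit_iff_isUnit_det, isUnit_iff_ne_zero, not_not,
    ← Matrix.exists_mulVec_eq_zero_iff]
  constructor
  · rintro ⟨w, hw, hw0⟩
    refine ⟨w, hw, ?_⟩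
    have : (algebraMap ℂ (Matrix ι ι ℂ)) μ *ᵥ w = μ • w := by
      have : (algebraMap ℂ (Matrix ι ι ℂ)) μ = μ • (1 : Matrix ι ι ℂ) := by
        rw [Algebra.algebraMap_eq_smul_one]
      rw [this, smul_mulVec, one_mulVec]
    rw [Matrix.sub_mulVec, sub_eq_zero] at hw0
    rw [← hw0, this]
  · rintro ⟨w, hw, hw0⟩
    refine ⟨w, hw, ?_⟩
    rw [Matrix.sub_mulVec, sub_eq_zero, hw0, Algebra.algebraMap_eq_smul_one,
      smul_mulVec, one_mulVec]

lemma real_eig_mem {A : Matrix ι ι ℝ} {r : ℝ} {u : ι → ℝ} (hu : u ≠ 0)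
    (he : A *ᵥ u = r • u) : (r : ℂ) ∈ spectrum ℂ (A.map fun x => (x : ℂ)) := by
  rw [mem_spectrum_iff_eig]
  refine ⟨fun i => (u i : ℂ), ?_, ?_⟩
  · intro h0
    apply hu
    funext i
    have := congrFun h0 i
    simpa using this
  · funext i
    have := congrFun he i
    simp only [Matrix.mulVec, dotProduct, Pi.smul_apply, smul_eq_mul,
      Matrix.map_apply] at this ⊢
    exact_mod_cast this

lemma abs_eig_subinvariant {A : Matrix ι ι ℝ} (hA : ∀ i j, 0 ≤ A i j) {μ : ℂ}
    (hμ : μ ∈ spectrum ℂ (A.map fun x => (x : ℂ))) :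
    ∃ x : ι → ℝ, (∀ i, 0 ≤ x i) ∧ x ≠ 0 ∧ ∀ i, ‖μ‖ * x i ≤ (A *ᵥ x) i := by
  obtain ⟨w, hw, he⟩ := mem_spectrum_iff_eig.mp hμ
  refine ⟨fun i => ‖w i‖, fun i => norm_nonneg _, ?_, ?_⟩
  · intro h0
    apply hw
    funext i
    have := congrFun h0 i
    simpa using this
  · intro i
    have hei := congrFun he i
    simp only [Matrix.mulVec, dotProduct, Pi.smul_apply, smul_eq_mul] at hei
    calc ‖μ‖ * ‖w i‖ = ‖μ * w i‖ := (norm_mul _ _).symm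
      _ = ‖∑ j, (A.map fun x => (x : ℂ)) i j * w j‖ := by rw [hei]
      _ ≤ ∑ j, ‖(A.map fun x => (x : ℂ)) i j * w j‖ :=
          norm_sum_le _ _
      _ = ∑ j, A i j * ‖w j‖ := by
          refine Finset.sum_congr rfl fun j _ => ?_
          rw [norm_mul, Matrix.map_apply, Complex.norm_of_nonneg (hA i j)]
      _ = (A *ᵥ fun j => ‖w j‖) i := rfl

lemma specRad_le {A : Matrix ι ι ℝ} {s : ℝ} (hs : 0 ≤ s)
    (hb : ∀ μ ∈ spectrum ℂ (A.map fun x => (x : ℂ)), ‖μ‖ ≤ s) :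
    specRad A ≤ s :=
  Real.sSup_le (by rintro r ⟨μ, hμ, rfl⟩; exact hb μ hμ) hs

lemma specRad_le_of_subinv {A : Matrix ι ι ℝ} (hA : ∀ i j, 0 ≤ A i j) {u : ι → ℝ}
    (hu : ∀ i, 0 < u i) {s : ℝ} (hs : 0 ≤ s) (hsub : ∀ i, (A *ᵥ u) i ≤ s * u i) :
    specRad A ≤ s := by
  refine specRad_le hs fun μ hμ => ?_
  obtain ⟨x, hx0, hxne, hxle⟩ := abs_eig_subinvariant hA hμ
  have hne : (Finset.univ : Finset ι).Nonempty := by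
    by_contra hemp
    rw [Finset.not_nonempty_iff_eq_empty] at hemp
    apply hxne; funext i
    exact absurd (Finset.mem_univ i) (by simp [hemp])
  obtain ⟨i1, _, hmax⟩ := Finset.exists_max_image Finset.univ (fun i => x i / u i) hne
  set t := x i1 / u i1 with ht
  obtain ⟨j0, hj0⟩ : ∃ j, x j ≠ 0 := by
    by_contra hc
    push_neg at hc
    exact hxne (funext hc)
  have hxj0 : 0 < x j0 := lt_of_le_of_ne (hx0 j0) (Ne.symm hj0)
  have htpos : 0 < t := lt_of_lt_of_le (div_pos hxj0 (hu j0)) (hmax j0 (Finset.mem_univ j0))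
  have hxle' : ∀ j, x j ≤ t * u j := fun j => by
    have := hmax j (Finset.mem_univ j)
    rw [div_le_iff₀ (hu j)] at this
    linarith [this]
  have hxi1 : x i1 = t * u i1 := by
    rw [ht, div_mul_cancel₀]
    exact (hu i1).ne'
  have key : ‖μ‖ * (t * u i1) ≤ s * (t * u i1) := by
    calc ‖μ‖ * (t * u i1) = ‖μ‖ * x i1 := by rw [hxi1]
      _ ≤ (A *ᵥ x) i1 := hxle i1
      _ ≤ (A *ᵥ fun j => t * u j) i1 := by
          simp only [Matrix.mulVec, dotProduct]
          exact Finset.sum_le_sum fun j _ =>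
            mul_le_mul_of_nonneg_left (hxle' j) (hA i1 j)
      _ = t * (A *ᵥ u) i1 := by
          simp only [Matrix.mulVec, dotProduct, Finset.mul_sum]
          exact Finset.sum_congr rfl fun j _ => by ring
      _ ≤ t * (s * u i1) := mul_le_mul_of_nonneg_left (hsub i1) htpos.le
      _ = s * (t * u i1) := by ring
  exact le_of_mul_le_mul_right (by linarith [key]) (mul_pos htpos (hu i1))

lemma specRad_transpose (A : Matrix ι ι ℝ) : specRad Aᵀ = specRad A := by
  unfold specRad
  congr 1
  ext r
  have hsp : ∀ μ : ℂ, μ ∈ spectrum ℂ (Aᵀ.map fun x => (x : ℂ)) ↔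
      μ ∈ spectrum ℂ (A.map fun x => (x : ℂ)) := by
    intro μ
    rw [spectrum.mem_iff, spectrum.mem_iff, Matrix.isUnit_iff_isUnit_det,
      Matrix.isUnit_iff_isUnit_det]
    have : (algebraMap ℂ (Matrix ι ι ℂ)) μ - Aᵀ.map (fun x => (x : ℂ)) =
        ((algebraMap ℂ (Matrix ι ι ℂ)) μ - A.map fun x => (x : ℂ))ᵀ := by
      ext i j
      by_cases h : i = j
      · subst h
        simp [Matrix.sub_apply, Matrix.transpose_apply, Matrix.algebraMap_matrix_apply,
          Matrix.map_apply]
      · simp [Matrix.sub_apply, Matrix.transpose_apply, Matrix.algebraMap_matrix_apply,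
          Matrix.map_apply, h, Ne.symm h]
    rw [this, Matrix.det_transpose]
  constructor
  · rintro ⟨μ, hμ, rfl⟩; exact ⟨μ, (hsp μ).mp hμ, rfl⟩
  · rintro ⟨μ, hμ, rfl⟩; exact ⟨μ, (hsp μ).mpr hμ, rfl⟩

end SIWS


namespace SIWS

variable {ι : Type} [Fintype ι] [DecidableEq ι]

theorem perron [Nonempty ι] {A : Matrix ι ι ℝ} (hA : ∀ i j, 0 ≤ A i j) (hirr : Irred A) :
    ∃ u : ι → ℝ, (∀ i, 0 < u i) ∧ A *ᵥ u = specRad A • u ∧ 0 ≤ specRad A := by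
  classical
  have hexists : ∀ i j : ι, ∃ k : ℕ, 0 < (A ^ k) i j := by
    intro i j
    by_cases h : i = j
    · exact ⟨0, by simp [h, Matrix.one_apply]⟩
    · obtain ⟨k, hk⟩ := hirr i j h
      exact ⟨k, lt_of_le_of_ne (pow_entry_nonneg hA k i j) (Ne.symm hk)⟩
  set k0 : ι → ι → ℕ := fun i j => (hexists i j).choose with hk0
  set K : ℕ := Finset.univ.sup fun i => Finset.univ.sup fun j => k0 i j with hK
  set P : Matrix ι ι ℝ := ∑ k ∈ Finset.range (K + 1), A ^ k with hP
  have hPnn : ∀ i j, 0 ≤ P i j := by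
    intro i j
    rw [hP, Matrix.sum_apply]
    exact Finset.sum_nonneg fun k _ => pow_entry_nonneg hA k i j
  have hPpos : ∀ i j, 0 < P i j := by
    intro i j
    rw [hP, Matrix.sum_apply]
    refine Finset.sum_pos' (fun k _ => pow_entry_nonneg hA k i j) ⟨k0 i j, ?_, ?_⟩
    · rw [Finset.mem_range, Nat.lt_succ_iff, hK]
      exact le_trans (Finset.le_sup (Finset.mem_univ j))
        (Finset.le_sup (f := fun i => Finset.univ.sup fun j => k0 i j) (Finset.mem_univ i))
    · exact (hexists i j).choose_spec
  have hPApos : ∀ x : ι → ℝ, (∀ i, 0 ≤ x i) → x ≠ 0 → ∀ i, 0 < (P *ᵥ x) i := by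
    intro x hx hxne i
    obtain ⟨j0, hj0⟩ : ∃ j, x j ≠ 0 := by
      by_contra hc; push_neg at hc; exact hxne (funext hc)
    refine Finset.sum_pos' (fun j _ => mul_nonneg (hPnn i j) (hx j)) ⟨j0, Finset.mem_univ j0, ?_⟩
    exact mul_pos (hPpos i j0) (lt_of_le_of_ne (hx j0) (Ne.symm hj0))
  have hPA : P * A = A * P := by
    rw [hP, Finset.sum_mul, Finset.mul_sum]
    exact Finset.sum_congr rfl fun k _ => by rw [← pow_succ, ← pow_succ']
  have hune : (Finset.univ : Finset ι).Nonempty := Finset.univ_nonempty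
  set R : ℝ := Finset.univ.sup' hune fun j => ∑ i, A i j with hR
  have hRnn : 0 ≤ R := by
    obtain ⟨j⟩ := (inferInstance : Nonempty ι)
    exact le_trans (Finset.sum_nonneg fun i _ => hA i j)
      (Finset.le_sup' (f := fun j => ∑ i, A i j) (Finset.mem_univ j))
  have feas_le : ∀ r : ℝ, ∀ x : ι → ℝ, (∀ i, 0 ≤ x i) → (∑ i, x i) = 1 →
      (∀ i, r * x i ≤ (A *ᵥ x) i) → r ≤ R := by
    intro r x hx hsum hfe
    have h2 : (∑ i, (A *ᵥ x) i) ≤ R := by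
      have hswap : (∑ i, (A *ᵥ x) i) = ∑ j, (∑ i, A i j) * x j := by
        simp only [Matrix.mulVec, dotProduct]
        rw [Finset.sum_comm]
        exact Finset.sum_congr rfl fun j _ => by rw [Finset.sum_mul]
      rw [hswap]
      calc ∑ j, (∑ i, A i j) * x j ≤ ∑ j, R * x j := by
            refine Finset.sum_le_sum fun j _ => mul_le_mul_of_nonneg_right ?_ (hx j)
            exact Finset.le_sup' (f := fun j => ∑ i, A i j) (Finset.mem_univ j)
        _ = R := by rw [← Finset.mul_sum, hsum, mul_one]
    calc r = ∑ i, r * x i := by rw [← Finset.mul_sum, hsum, mul_one]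
      _ ≤ ∑ i, (A *ᵥ x) i := Finset.sum_le_sum fun i _ => hfe i
      _ ≤ R := h2
  set T : Set (ℝ × (ι → ℝ)) := {p | p.1 ∈ Set.Icc 0 R ∧ (∀ i, 0 ≤ p.2 i) ∧
    (∑ i, p.2 i) = 1 ∧ ∀ i, p.1 * p.2 i ≤ (A *ᵥ p.2) i} with hT
  have hcard : (0 : ℝ) < (Fintype.card ι : ℝ) := by exact_mod_cast Fintype.card_pos
  have hT0 : ((0 : ℝ), fun _ => ((Fintype.card ι : ℝ))⁻¹) ∈ T := by
    refine ⟨⟨le_refl 0, hRnn⟩, fun i => by positivity, ?_, fun i => ?_⟩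
    · rw [Finset.sum_const, Finset.card_univ, nsmul_eq_mul, mul_inv_cancel₀ hcard.ne']
    · rw [zero_mul]
      exact Finset.sum_nonneg fun j _ => mul_nonneg (hA i j) (by positivity)
  have hTclosed : IsClosed T := by
    have c1 : IsClosed {p : ℝ × (ι → ℝ) | p.1 ∈ Set.Icc 0 R} :=
      isClosed_Icc.preimage continuous_fst
    have c2 : IsClosed {p : ℝ × (ι → ℝ) | ∀ i, 0 ≤ p.2 i} := by
      rw [Set.setOf_forall]
      exact isClosed_iInter fun i =>
        isClosed_le continuous_const ((continuous_apply i).comp continuous_snd)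
    have c3 : IsClosed {p : ℝ × (ι → ℝ) | (∑ i, p.2 i) = 1} :=
      isClosed_eq (continuous_finset_sum _ fun i _ => (continuous_apply i).comp continuous_snd)
        continuous_const
    have c4 : IsClosed {p : ℝ × (ι → ℝ) | ∀ i, p.1 * p.2 i ≤ (A *ᵥ p.2) i} := by
      rw [Set.setOf_forall]
      refine isClosed_iInter fun i => isClosed_le
        (continuous_fst.mul ((continuous_apply i).comp continuous_snd)) ?_
      have : (fun p : ℝ × (ι → ℝ) => (A *ᵥ p.2) i) =
          fun p : ℝ × (ι → ℝ) => ∑ j, A i j * p.2 j := rfl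
      rw [this]
      exact continuous_finset_sum _ fun j _ =>
        continuous_const.mul ((continuous_apply j).comp continuous_snd)
    exact c1.inter (c2.inter (c3.inter c4))
  have hTsub : T ⊆ Set.Icc (0 : ℝ) R ×ˢ Set.Icc (0 : ι → ℝ) 1 := by
    rintro ⟨r, x⟩ ⟨h1, h2, h3, _⟩
    refine ⟨h1, ⟨fun i => h2 i, fun i => ?_⟩⟩
    calc x i ≤ ∑ j, x j := Finset.single_le_sum (fun j _ => h2 j) (Finset.mem_univ i)
      _ = 1 := h3
  have hTcomp : IsCompact T :=
    (isCompact_Icc.prod isCompact_Icc).of_isClosed_subset hTclosed hTsub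
  set S : Set ℝ := Prod.fst '' T with hS
  have hScomp : IsCompact S := hTcomp.image continuous_fst
  have hSne : S.Nonempty := ⟨0, _, hT0, rfl⟩
  set rs : ℝ := sSup S with hrs
  have hub : ∀ p ∈ T, Prod.fst p ≤ rs := fun p hp => le_csSup hScomp.bddAbove ⟨p, hp, rfl⟩
  obtain ⟨p0, hp0T, hp0⟩ := hScomp.sSup_mem hSne
  obtain ⟨hIcc, hxnn, hxsum, hxfe⟩ := hp0T
  set xs : ι → ℝ := p0.2 with hxs
  have hr0 : 0 ≤ rs := by rw [hrs, ← hp0]; exact hIcc.1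
  have hxne : xs ≠ 0 := by
    intro h0
    have hs1 : (∑ i, xs i) = 1 := hxsum
    rw [h0] at hs1
    simp at hs1
  have hfe : ∀ i, rs * xs i ≤ (A *ᵥ xs) i := fun i => by
    have := hxfe i; rw [hp0, ← hrs] at this; exact this
  -- equality at the maximizer
  have heq : A *ᵥ xs = rs • xs := by
    by_contra hne
    set y : ι → ℝ := fun i => (A *ᵥ xs) i - rs * xs i with hy
    have hynn : ∀ i, 0 ≤ y i := fun i => sub_nonneg.mpr (hfe i)
    have hyne : y ≠ 0 := by
      intro h0
      apply hne
      funext i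
      have := congrFun h0 i
      simp only [hy, Pi.zero_apply] at this
      have : (A *ᵥ xs) i = rs * xs i := by linarith
      simpa [Pi.smul_apply, smul_eq_mul] using this
    set z : ι → ℝ := P *ᵥ xs with hz
    have hzpos : ∀ i, 0 < z i := hPApos xs hxnn hxne
    have hAxy : A *ᵥ xs = rs • xs + y := by
      funext i; simp only [hy, Pi.add_apply, Pi.smul_apply, smul_eq_mul]; ring
    have hAz : A *ᵥ z = rs • z + P *ᵥ y := by
      rw [hz, Matrix.mulVec_mulVec, ← hPA, ← Matrix.mulVec_mulVec, hAxy,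
        Matrix.mulVec_add, Matrix.mulVec_smul]
    have hPy : ∀ i, 0 < (P *ᵥ y) i := hPApos y hynn hyne
    set ε : ℝ := Finset.univ.inf' hune fun i => (P *ᵥ y) i / z i with hε
    have hεpos : 0 < ε := by
      rw [hε, Finset.lt_inf'_iff]
      exact fun i _ => div_pos (hPy i) (hzpos i)
    have hclaim : ∀ i, (rs + ε) * z i ≤ (A *ᵥ z) i := by
      intro i
      have h1 : (A *ᵥ z) i = rs * z i + (P *ᵥ y) i := by
        have := congrFun hAz i
        simpa [Pi.add_apply, Pi.smul_apply, smul_eq_mul] using this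
      have h2 : ε * z i ≤ (P *ᵥ y) i := by
        have h3 : ε ≤ (P *ᵥ y) i / z i := Finset.inf'_le _ (Finset.mem_univ i)
        rw [le_div_iff₀ (hzpos i)] at h3
        linarith
      rw [h1]; nlinarith [hzpos i]
    set σ : ℝ := ∑ i, z i with hσ
    have hσpos : 0 < σ := Finset.sum_pos (fun i _ => hzpos i) hune
    set x' : ι → ℝ := fun i => σ⁻¹ * z i with hx'
    have hx'nn : ∀ i, 0 ≤ x' i := fun i => mul_nonneg (inv_nonneg.mpr hσpos.le) (hzpos i).le
    have hx'sum : (∑ i, x' i) = 1 := by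
      simp only [hx']; rw [← Finset.mul_sum, ← hσ, inv_mul_cancel₀ hσpos.ne']
    have hx'fe : ∀ i, (rs + ε) * x' i ≤ (A *ᵥ x') i := by
      intro i
      have hAx' : (A *ᵥ x') i = σ⁻¹ * (A *ᵥ z) i := by
        simp only [hx', Matrix.mulVec, dotProduct, Finset.mul_sum]
        exact Finset.sum_congr rfl fun j _ => by ring
      rw [hAx']
      have := mul_le_mul_of_nonneg_left (hclaim i) (inv_nonneg.mpr hσpos.le)
      calc (rs + ε) * x' i = σ⁻¹ * ((rs + ε) * z i) := by rw [hx']; ring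
        _ ≤ σ⁻¹ * (A *ᵥ z) i := this
    have hmem : ((rs + ε, x') : ℝ × (ι → ℝ)) ∈ T := by
      exact ⟨⟨by change (0:ℝ) ≤ rs + ε; linarith, feas_le _ x' hx'nn hx'sum hx'fe⟩, hx'nn, hx'sum, hx'fe⟩
    have h5 : rs + ε ≤ rs := hub _ hmem
    linarith
  -- positivity of the eigenvector
  have hpow : ∀ k : ℕ, (A ^ k) *ᵥ xs = (rs ^ k) • xs := by
    intro k
    induction k with
    | zero => simp [Matrix.one_mulVec]
    | succ k ih =>
        rw [pow_succ', ← Matrix.mulVec_mulVec, ih, Matrix.mulVec_smul, heq, smul_smul,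
          pow_succ', mul_comm (rs ^ k) rs]
  have hPx : P *ᵥ xs = (∑ k ∈ Finset.range (K + 1), rs ^ k) • xs := by
    funext i
    rw [hP]
    have h1 : ((∑ k ∈ Finset.range (K + 1), A ^ k) *ᵥ xs) i
        = ∑ k ∈ Finset.range (K + 1), ((A ^ k) *ᵥ xs) i := by
      simp only [Matrix.mulVec, dotProduct, Matrix.sum_apply, Finset.sum_mul]
      rw [Finset.sum_comm]
    rw [h1]
    simp only [hpow, Pi.smul_apply, smul_eq_mul, Finset.sum_mul]
  have hs0 : (1 : ℝ) ≤ ∑ k ∈ Finset.range (K + 1), rs ^ k := by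
    have : (rs : ℝ) ^ 0 ≤ ∑ k ∈ Finset.range (K + 1), rs ^ k :=
      Finset.single_le_sum (fun k _ => pow_nonneg hr0 k) (Finset.mem_range.mpr (Nat.succ_pos K))
    simpa using this
  have hxpos : ∀ i, 0 < xs i := by
    intro i
    have hp := hPApos xs hxnn hxne i
    rw [hPx] at hp
    simp only [Pi.smul_apply, smul_eq_mul] at hp
    rcases mul_pos_iff.mp hp with ⟨_, h⟩ | ⟨h1, _⟩
    · exact h
    · linarith
  -- rs equals the spectral radius
  have hbd : ∀ μ ∈ spectrum ℂ (A.map fun x => (x : ℂ)), ‖μ‖ ≤ rs := by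
    intro μ hμ
    obtain ⟨x, hx0, hxne', hxle⟩ := abs_eig_subinvariant hA hμ
    obtain ⟨j0, hj0⟩ : ∃ j, x j ≠ 0 := by
      by_contra hc; push_neg at hc; exact hxne' (funext hc)
    set σx : ℝ := ∑ i, x i with hσx
    have hσxpos : 0 < σx :=
      Finset.sum_pos' (fun i _ => hx0 i)
        ⟨j0, Finset.mem_univ j0, lt_of_le_of_ne (hx0 j0) (Ne.symm hj0)⟩
    set x' : ι → ℝ := fun i => σx⁻¹ * x i with hx'
    have hx'nn : ∀ i, 0 ≤ x' i := fun i => mul_nonneg (inv_nonneg.mpr hσxpos.le) (hx0 i)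
    have hx'sum : (∑ i, x' i) = 1 := by
      simp only [hx']; rw [← Finset.mul_sum, ← hσx, inv_mul_cancel₀ hσxpos.ne']
    have hx'fe : ∀ i, ‖μ‖ * x' i ≤ (A *ᵥ x') i := by
      intro i
      have hAx' : (A *ᵥ x') i = σx⁻¹ * (A *ᵥ x) i := by
        simp only [hx', Matrix.mulVec, dotProduct, Finset.mul_sum]
        exact Finset.sum_congr rfl fun j _ => by ring
      rw [hAx']
      calc ‖μ‖ * x' i = σx⁻¹ * (‖μ‖ * x i) := by rw [hx']; ring
        _ ≤ σx⁻¹ * (A *ᵥ x) i :=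
            mul_le_mul_of_nonneg_left (hxle i) (inv_nonneg.mpr hσxpos.le)
    have hmem : ((‖μ‖, x') : ℝ × (ι → ℝ)) ∈ T :=
      ⟨⟨norm_nonneg μ, feas_le _ x' hx'nn hx'sum hx'fe⟩, hx'nn, hx'sum, hx'fe⟩
    exact hub _ hmem
  have hup : specRad A ≤ rs := specRad_le hr0 hbd
  have hlow : rs ≤ specRad A := by
    refine le_csSup ⟨rs, ?_⟩ ⟨(rs : ℂ), real_eig_mem hxne heq, ?_⟩
    · rintro r ⟨μ, hμ, rfl⟩; exact hbd μ hμ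
    · rw [Complex.norm_of_nonneg hr0]
  have hreq : specRad A = rs := le_antisymm hup hlow
  exact ⟨xs, hxpos, by rw [hreq]; exact heq, hreq ▸ hr0⟩

end SIWS


namespace SIWS

abbrev EE (n m : ℕ) := SIdx n m → ℝ

lemma step_eq {n m : ℕ} (h : ℝ) (Dfm Bfm : Matrix (SIdx n m) (SIdx n m) ℝ) :
    ∀ z : SIdx n m → ℝ, step h Dfm Bfm z =
      (1 - h • Dfm + h • Bfm) *ᵥ z - h • (Zm z *ᵥ (Bfm *ᵥ z)) := by
  intro z
  unfold step
  rw [Matrix.sub_mulVec, ← Matrix.mulVec_mulVec, Matrix.sub_mulVec, Matrix.one_mulVec,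
    Matrix.add_mulVec, Matrix.sub_mulVec, Matrix.one_mulVec, Matrix.smul_mulVec,
    Matrix.smul_mulVec]
  module

lemma fderiv_step {n m : ℕ} (h : ℝ) (Dfm Bfm : Matrix (SIdx n m) (SIdx n m) ℝ) :
    ⇑(fderiv ℝ (step h Dfm Bfm) (0 : SIdx n m → ℝ)) = (1 - h • Dfm + h • Bfm).mulVec := by
  classical
  set M : Matrix (SIdx n m) (SIdx n m) ℝ := 1 - h • Dfm + h • Bfm with hM
  set L : EE n m →L[ℝ] EE n m := LinearMap.toContinuousLinearMap M.mulVecLin with hL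
  set bil : EE n m →ₗ[ℝ] EE n m →ₗ[ℝ] EE n m := LinearMap.mk₂ ℝ
    (fun a b => fun i => Sum.elim (fun i0 => a (Sum.inl i0)) (fun _ => (0 : ℝ)) i * (Bfm *ᵥ b) i)
    (by intro a a' b; funext i; cases i <;>
          simp only [Pi.add_apply, Sum.elim_inl, Sum.elim_inr] <;> ring)
    (by intro c a b; funext i; cases i <;>
          simp only [Pi.smul_apply, Sum.elim_inl, Sum.elim_inr, smul_eq_mul] <;> ring)
    (by intro a b b'; funext i; rw [Matrix.mulVec_add]; cases i <;>
          simp only [Pi.add_apply, Sum.elim_inl, Sum.elim_inr] <;> ring)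
    (by intro c a b; funext i; rw [Matrix.mulVec_smul]; cases i <;>
          simp only [Pi.smul_apply, Sum.elim_inl, Sum.elim_inr, smul_eq_mul] <;> ring) with hbil
  set Φ : EE n m →L[ℝ] EE n m →L[ℝ] EE n m := LinearMap.toContinuousLinearMap
    ((LinearMap.toContinuousLinearMap (E := EE n m) (F' := EE n m) :
      (EE n m →ₗ[ℝ] EE n m) ≃ₗ[ℝ] (EE n m →L[ℝ] EE n m)).toLinearMap.comp bil) with hΦ
  have hΦapp : ∀ a b : EE n m, Φ a b = Zm a *ᵥ (Bfm *ᵥ b) := by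
    intro a b
    funext i
    have h1 : Φ a b = bil a b := by
      rw [hΦ, LinearMap.coe_toContinuousLinearMap']
      simp [LinearMap.coe_comp, Function.comp, LinearMap.coe_toContinuousLinearMap']
    rw [h1, hbil]
    rw [Zm, Matrix.mulVec_diagonal]
    rfl
  set hb := Φ.isBoundedBilinearMap with hhb
  have h1 : HasFDerivAt (fun z : EE n m => Φ z z)
      ((hb.deriv ((0 : EE n m), (0 : EE n m))).comp
        ((ContinuousLinearMap.id ℝ (EE n m)).prod (ContinuousLinearMap.id ℝ (EE n m)))) 0 := by
    have hinner : HasFDerivAt (fun z : EE n m => (z, z))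
        ((ContinuousLinearMap.id ℝ (EE n m)).prod (ContinuousLinearMap.id ℝ (EE n m))) 0 :=
      (hasFDerivAt_id _).prodMk (hasFDerivAt_id _)
    have houter := hb.hasFDerivAt ((0 : EE n m), (0 : EE n m))
    have hcomp : HasFDerivAt
        ((fun p : EE n m × EE n m => Φ p.1 p.2) ∘ fun z : EE n m => (z, z))
        ((hb.deriv ((0 : EE n m), (0 : EE n m))).comp
          ((ContinuousLinearMap.id ℝ (EE n m)).prod (ContinuousLinearMap.id ℝ (EE n m)))) 0 :=
      HasFDerivAt.comp _ houter hinner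
    simpa [Function.comp] using hcomp
  have hQ0 : HasFDerivAt (fun z : EE n m => Φ z z) (0 : EE n m →L[ℝ] EE n m) 0 := by
    refine h1.congr_fderiv ?_
    refine ContinuousLinearMap.ext fun x => ?_
    rw [ContinuousLinearMap.comp_apply]
    have hder := hb.deriv_apply ((0 : EE n m), (0 : EE n m))
      (((ContinuousLinearMap.id ℝ (EE n m)).prod (ContinuousLinearMap.id ℝ (EE n m))) x)
    rw [hder]
    simp
  have hstep : HasFDerivAt (step h Dfm Bfm) L 0 := by
    have heq : step h Dfm Bfm = fun z : EE n m => L z - h • Φ z z := by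
      funext z
      rw [step_eq h Dfm Bfm z, hΦapp]
      congr 1
    rw [heq]
    have := L.hasFDerivAt.sub (hQ0.const_smul h)
    simpa using this
  rw [hstep.fderiv]
  funext v
  rw [hL, LinearMap.coe_toContinuousLinearMap']
  exact Matrix.mulVecLin_apply M v

end SIWS


namespace SIWS

lemma specRad_of_isEmpty {ι : Type} [Fintype ι] [DecidableEq ι] [IsEmpty ι]
    (A : Matrix ι ι ℝ) : specRad A = 0 := by
  unfold specRad
  convert Real.sSup_empty
  ext r
  simp only [Set.mem_setOf_eq, Set.mem_empty_iff_false, iff_false, not_exists]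
  intro μ hμ
  haveI : Subsingleton (Matrix ι ι ℂ) := ⟨fun a b => by ext i j; exact isEmptyElim i⟩
  exact (spectrum.mem_iff.mp hμ.1) (isUnit_of_subsingleton _)

end SIWS

open SIWS in
theorem stmt7_aux {n m : ℕ} (h wmax : ℝ) (δ : Fin n → ℝ) (δw : Fin m → ℝ)
    (B : Matrix (Fin n) (Fin n) ℝ) (Bw : Matrix (Fin n) (Fin m) ℝ)
    (Cw : Matrix (Fin m) (Fin n) ℝ)
    (hA1 : A1 h δ δw B Bw Cw wmax)
    (hA2 : Irred (BfM B Bw Cw)) :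
    (⇑(fderiv ℝ (step h (DfM δ δw) (BfM B Bw Cw)) (0 : SIdx n m → ℝ)) =
      (1 - h • DfM δ δw + h • BfM B Bw Cw).mulVec) ∧
    (specRad ((DfM δ δw)⁻¹ * BfM B Bw Cw) ≤ 1 →
      specRad (1 - h • DfM δ δw + h • BfM B Bw Cw) ≤ 1 ∧
      ∃ ε > (0 : ℝ), ∃ c > (0 : ℝ), ∀ z : ℕ → SIdx n m → ℝ,
        (∀ t, z (t + 1) = step h (DfM δ δw) (BfM B Bw Cw) (z t)) →
        inD wmax (z 0) → ‖z 0‖ ≤ ε →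
        ∀ t, ‖z t‖ ≤ c * specRad (1 - h • DfM δ δw + h • BfM B Bw Cw) ^ t * ‖z 0‖) := by
  classical
  constructor
  · exact fderiv_step h (DfM δ δw) (BfM B Bw Cw)
  intro hrad
  set Bf := BfM B Bw Cw with hBf
  set Df := DfM δ δw with hDf
  set M : Matrix (SIdx n m) (SIdx n m) ℝ := 1 - h • Df + h • Bf with hM
  rcases isEmpty_or_nonempty (SIdx n m) with hE | hNE
  · haveI := hE
    refine ⟨by rw [specRad_of_isEmpty]; norm_num, 1, one_pos, 1, one_pos, ?_⟩
    intro z _ _ _ t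
    have hz : ∀ t, z t = 0 := fun t => funext fun i => isEmptyElim i
    rw [hz t, hz 0, norm_zero, mul_zero]
  haveI := hNE
  set d : SIdx n m → ℝ := Sum.elim δ δw with hd
  have hdpos : ∀ i, 0 < d i := by
    rintro (i | j)
    · simpa [hd] using hA1.delta_pos i
    · simpa [hd] using hA1.deltaw_pos j
  have hhd1 : ∀ i, h * d i ≤ 1 := by
    rintro (i | j)
    · simpa [hd] using (hA1.h_delta i).2
    · simpa [hd] using (hA1.h_deltaw j).2
  have hpos := hA1.h_pos
  have hBfnn : ∀ i j, 0 ≤ Bf i j := by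
    rintro (i | i) (j | j)
    · simpa [hBf, BfM] using hA1.B_nonneg i j
    · simpa [hBf, BfM] using hA1.Bw_nonneg i j
    · simpa [hBf, BfM] using hA1.Cw_nonneg i j
    · simp [hBf, BfM]
  have hDfdiag : Df = Matrix.diagonal d := rfl
  have hMapp : ∀ i j, M i j = (if i = j then 1 - h * d i else 0) + h * Bf i j := by
    intro i j
    by_cases hij : i = j
    · subst hij
      simp [hM, Matrix.add_apply, Matrix.sub_apply, Matrix.one_apply_eq, hDfdiag,
        Matrix.smul_apply, Matrix.diagonal_apply_eq, smul_eq_mul]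
    · simp [hM, Matrix.add_apply, Matrix.sub_apply, Matrix.one_apply_ne hij, hDfdiag,
        Matrix.smul_apply, Matrix.diagonal_apply_ne _ hij, smul_eq_mul, hij]
  have hMnn : ∀ i j, 0 ≤ M i j := by
    intro i j
    rw [hMapp]
    by_cases hij : i = j
    · subst hij
      simp only [eq_self_iff_true, if_true]
      nlinarith [hhd1 i, mul_nonneg hpos.le (hBfnn i i)]
    · simp only [hij, if_false]
      nlinarith [mul_nonneg hpos.le (hBfnn i j)]
  have hsBfnn : ∀ i j, 0 ≤ (h • Bf) i j := fun i j => by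
    rw [Matrix.smul_apply, smul_eq_mul]; exact mul_nonneg hpos.le (hBfnn i j)
  have hBfleM : ∀ i j, (h • Bf) i j ≤ M i j := by
    intro i j
    rw [Matrix.smul_apply, smul_eq_mul, hMapp]
    by_cases hij : i = j
    · simp only [hij, if_true]; nlinarith [hhd1 j]
    · simp [hij]
  have hIrrM : Irred M := irred_of_le hsBfnn hBfleM (irred_smul hpos.ne' hA2)
  -- the matrix Df⁻¹ * Bf
  have hDfinv : Df⁻¹ = Matrix.diagonal fun i => (d i)⁻¹ := by
    apply Matrix.inv_eq_right_inv
    rw [hDfdiag, Matrix.diagonal_mul_diagonal]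
    have hcan : (fun i => d i * (d i)⁻¹) = fun _ : SIdx n m => (1 : ℝ) :=
      funext fun i => mul_inv_cancel₀ (hdpos i).ne'
    rw [hcan, Matrix.diagonal_one]
  have hAapp : ∀ i j, (Df⁻¹ * Bf) i j = (d i)⁻¹ * Bf i j := by
    intro i j; rw [hDfinv, Matrix.diagonal_mul]
  have hAnn : ∀ i j, 0 ≤ (Df⁻¹ * Bf) i j := fun i j => by
    rw [hAapp]; exact mul_nonneg (inv_nonneg.mpr (hdpos i).le) (hBfnn i j)
  have hune : (Finset.univ : Finset (SIdx n m)).Nonempty := Finset.univ_nonempty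
  set cI : ℝ := Finset.univ.inf' hune fun i => (d i)⁻¹ with hcI
  have hcIpos : 0 < cI := by
    rw [hcI, Finset.lt_inf'_iff]
    exact fun i _ => inv_pos.mpr (hdpos i)
  have hIrrA : Irred (Df⁻¹ * Bf) := by
    refine irred_of_le (A := cI • Bf) (fun i j => by
      rw [Matrix.smul_apply, smul_eq_mul]; exact mul_nonneg hcIpos.le (hBfnn i j)) ?_
      (irred_smul hcIpos.ne' hA2)
    intro i j
    rw [Matrix.smul_apply, smul_eq_mul, hAapp]
    exact mul_le_mul_of_nonneg_right (Finset.inf'_le _ (Finset.mem_univ i)) (hBfnn i j)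
  obtain ⟨u, hu, hAu, hrA0⟩ := perron hAnn hIrrA
  have hDfA : Df * (Df⁻¹ * Bf) = Bf := by
    have h1 : Df * Df⁻¹ = 1 := by
      rw [hDfinv, hDfdiag, Matrix.diagonal_mul_diagonal]
      have : (fun i => d i * (d i)⁻¹) = fun _ : SIdx n m => (1 : ℝ) := by
        funext i; exact mul_inv_cancel₀ (hdpos i).ne'
      rw [this, Matrix.diagonal_one]
    rw [← mul_assoc, h1, one_mul]
  have hBfu : Bf *ᵥ u = specRad (Df⁻¹ * Bf) • (Df *ᵥ u) := by
    conv_lhs => rw [← hDfA]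
    rw [← Matrix.mulVec_mulVec, hAu, Matrix.mulVec_smul]
  have hexp : ∀ (x : SIdx n m → ℝ) i, (M *ᵥ x) i = x i - h * (d i * x i) + h * (Bf *ᵥ x) i := by
    intro x i
    rw [hM, Matrix.add_mulVec, Matrix.sub_mulVec, Matrix.one_mulVec,
      Matrix.smul_mulVec, Matrix.smul_mulVec]
    have e1 : (Df *ᵥ x) i = d i * x i := by rw [hDfdiag]; exact Matrix.mulVec_diagonal ..
    simp only [Pi.add_apply, Pi.sub_apply, Pi.smul_apply, smul_eq_mul, e1]
  have hMu : ∀ i, (M *ᵥ u) i ≤ 1 * u i := by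
    intro i
    rw [hexp u i]
    have h2 : (Bf *ᵥ u) i = specRad (Df⁻¹ * Bf) * (d i * u i) := by
      rw [hBfu]
      have e1 : (Df *ᵥ u) i = d i * u i := by rw [hDfdiag]; exact Matrix.mulVec_diagonal ..
      rw [Pi.smul_apply, smul_eq_mul, e1]
    rw [h2]
    nlinarith [mul_nonneg (mul_nonneg hpos.le (sub_nonneg.mpr hrad)) (mul_pos (hdpos i) (hu i)).le]
  have hspec1 : specRad M ≤ 1 := specRad_le_of_subinv hMnn hu zero_le_one hMu
  refine ⟨hspec1, 1, one_pos, ?_⟩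
  -- left Perron vector of M
  obtain ⟨v, hv, hMv, hρT0⟩ := perron (A := Mᵀ) (fun i j => hMnn j i) (irred_transpose hIrrM)
  have hTr : specRad Mᵀ = specRad M := specRad_transpose M
  have hρ0 : 0 ≤ specRad M := hTr ▸ hρT0
  set ρ : ℝ := specRad M with hρ
  have hdot : ∀ x : SIdx n m → ℝ, (∑ i, v i * (M *ᵥ x) i) = ρ * ∑ i, v i * x i := by
    intro x
    have h1 : ∀ j, (∑ i, v i * M i j) = ρ * v j := by
      intro j
      have h0 := congrFun hMv j
      rw [hTr] at h0
      have h2 : (∑ i, Mᵀ j i * v i) = ρ * v j := by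
        simpa [Matrix.mulVec, dotProduct, smul_eq_mul] using h0
      rw [← h2]
      exact Finset.sum_congr rfl fun i _ => by rw [Matrix.transpose_apply]; ring
    calc (∑ i, v i * (M *ᵥ x) i) = ∑ i, ∑ j, v i * (M i j * x j) := by
          refine Finset.sum_congr rfl fun i _ => ?_
          simp only [Matrix.mulVec, dotProduct, Finset.mul_sum]
      _ = ∑ j, ∑ i, v i * (M i j * x j) := Finset.sum_comm
      _ = ∑ j, (∑ i, v i * M i j) * x j := by
          refine Finset.sum_congr rfl fun j _ => ?_
          rw [Finset.sum_mul]
          exact Finset.sum_congr rfl fun i _ => by ring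
      _ = ∑ j, ρ * (v j * x j) := by
          refine Finset.sum_congr rfl fun j _ => ?_
          rw [h1 j]; ring
      _ = ρ * ∑ j, v j * x j := by rw [Finset.mul_sum]
  -- pointwise formula for the step map
  have hstep_app : ∀ (z : SIdx n m → ℝ) i, step h Df Bf z i =
      (1 - h * d i) * z i +
        h * (1 - Sum.elim (fun i0 => z (Sum.inl i0)) (fun _ => (0 : ℝ)) i) * (Bf *ᵥ z) i := by
    intro z i
    have h0 := congrFun (step_eq h Df Bf z) i
    rw [h0]
    have e2 : (Zm z *ᵥ (Bf *ᵥ z)) i =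
        Sum.elim (fun i0 => z (Sum.inl i0)) (fun _ => (0 : ℝ)) i * (Bf *ᵥ z) i := by
      rw [Zm]; exact Matrix.mulVec_diagonal ..
    rw [Pi.sub_apply, Pi.smul_apply, smul_eq_mul, e2, ← hM, hexp z i]
    ring
  have znn : ∀ z : SIdx n m → ℝ, inD wmax z → ∀ i, 0 ≤ z i := by
    rintro z hz (i | j)
    · exact (hz.1 i).1
    · exact (hz.2 j).1
  have hBfznn : ∀ z : SIdx n m → ℝ, (∀ i, 0 ≤ z i) → ∀ i, 0 ≤ (Bf *ᵥ z) i := by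
    intro z hz i
    rw [show (Bf *ᵥ z) i = ∑ j, Bf i j * z j from rfl]
    exact Finset.sum_nonneg fun j _ => mul_nonneg (hBfnn i j) (hz j)
  have hBfz_inl : ∀ z : SIdx n m → ℝ, inD wmax z → ∀ i : Fin n,
      h * (Bf *ᵥ z) (Sum.inl i) ≤ 1 := by
    intro z hz i
    have hle : (Bf *ᵥ z) (Sum.inl i) ≤ (∑ j, B i j) + ∑ j, Bw i j * wmax := by
      have hsum : (Bf *ᵥ z) (Sum.inl i) =
          (∑ j, B i j * z (Sum.inl j)) + ∑ j, Bw i j * z (Sum.inr j) := by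
        have e1 : (∑ j : Fin n, Bf (Sum.inl i) (Sum.inl j) * z (Sum.inl j))
            = ∑ j, B i j * z (Sum.inl j) :=
          Finset.sum_congr rfl fun j _ => by simp [hBf, BfM]
        have e2 : (∑ j : Fin m, Bf (Sum.inl i) (Sum.inr j) * z (Sum.inr j))
            = ∑ j, Bw i j * z (Sum.inr j) :=
          Finset.sum_congr rfl fun j _ => by simp [hBf, BfM]
        rw [show (Bf *ᵥ z) (Sum.inl i) = ∑ k, Bf (Sum.inl i) k * z k from rfl,
          Fintype.sum_sum_type, e1, e2]
      rw [hsum]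
      have hb1 : (∑ j, B i j * z (Sum.inl j)) ≤ ∑ j, B i j :=
        Finset.sum_le_sum fun j _ => by nlinarith [hA1.B_nonneg i j, (hz.1 j).1, (hz.1 j).2]
      have hb2 : (∑ j, Bw i j * z (Sum.inr j)) ≤ ∑ j, Bw i j * wmax :=
        Finset.sum_le_sum fun j _ => by nlinarith [hA1.Bw_nonneg i j, (hz.2 j).1, (hz.2 j).2]
      linarith
    calc h * (Bf *ᵥ z) (Sum.inl i) ≤ h * ((∑ j, B i j) + ∑ j, Bw i j * wmax) :=
          mul_le_mul_of_nonneg_left hle hpos.le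
      _ ≤ 1 := (hA1.h_beta i).2
  have hBfz_inr : ∀ z : SIdx n m → ℝ, inD wmax z → ∀ j : Fin m,
      (Bf *ᵥ z) (Sum.inr j) ≤ δw j * wmax := by
    intro z hz j
    have hsum : (Bf *ᵥ z) (Sum.inr j) = ∑ k, Cw j k * z (Sum.inl k) := by
      rw [show (Bf *ᵥ z) (Sum.inr j) = ∑ k, Bf (Sum.inr j) k * z k from rfl,
        Fintype.sum_sum_type]
      have h2 : (∑ k : Fin m, Bf (Sum.inr j) (Sum.inr k) * z (Sum.inr k)) = 0 := by
        refine Finset.sum_eq_zero fun k _ => ?_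
        simp [hBf, BfM]
      rw [h2, add_zero]
      exact Finset.sum_congr rfl fun k _ => by simp [hBf, BfM]
    rw [hsum]
    have h3 : (∑ k, Cw j k * z (Sum.inl k)) ≤ ∑ k, Cw j k :=
      Finset.sum_le_sum fun k _ => by
        nlinarith [hA1.Cw_nonneg j k, (hz.1 k).1, (hz.1 k).2]
    have h4 : (∑ k, Cw j k) ≤ δw j * wmax := by
      have := (hA1.ratio_mem j).2
      rw [div_le_iff₀ (hA1.deltaw_pos j)] at this
      linarith [this]
    linarith
  have hinv : ∀ z : SIdx n m → ℝ, inD wmax z → inD wmax (step h Df Bf z) := by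
    intro z hz
    constructor
    · intro i
      rw [Set.mem_Icc]
      have happ := hstep_app z (Sum.inl i)
      simp only [Sum.elim_inl, hd] at happ
      have hx0 := (hz.1 i).1
      have hx1 := (hz.1 i).2
      have hy0 := hBfznn z (znn z hz) (Sum.inl i)
      have hy1 := hBfz_inl z hz i
      have hd0 := (hA1.h_delta i).1
      have hd1 := (hA1.h_delta i).2
      constructor
      · rw [happ]
        nlinarith [mul_nonneg (sub_nonneg.mpr hd1) hx0,
          mul_nonneg (mul_nonneg hpos.le (sub_nonneg.mpr hx1)) hy0]
      · rw [happ]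
        nlinarith [mul_nonneg (sub_nonneg.mpr hx1) (sub_nonneg.mpr hy1),
          mul_nonneg hd0.le hx0]
    · intro j
      rw [Set.mem_Icc]
      have happ := hstep_app z (Sum.inr j)
      simp only [Sum.elim_inr, hd] at happ
      have hw0 := (hz.2 j).1
      have hw1 := (hz.2 j).2
      have hy0 := hBfznn z (znn z hz) (Sum.inr j)
      have hy1 := hBfz_inr z hz j
      have hd0 := (hA1.h_deltaw j).1
      have hd1 := (hA1.h_deltaw j).2
      have hwm := hA1.wmax_pos
      constructor
      · rw [happ]
        nlinarith [mul_nonneg (sub_nonneg.mpr hd1) hw0, mul_nonneg hpos.le hy0]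
      · rw [happ]
        nlinarith [mul_le_mul_of_nonneg_left hw1 (sub_nonneg.mpr hd1),
          mul_le_mul_of_nonneg_left hy1 hpos.le]
  have hdom : ∀ z : SIdx n m → ℝ, inD wmax z → ∀ i, step h Df Bf z i ≤ (M *ᵥ z) i := by
    intro z hz i
    rw [hstep_app z i, hexp z i]
    have hy0 := hBfznn z (znn z hz) i
    have he0 : 0 ≤ Sum.elim (fun i0 => z (Sum.inl i0)) (fun _ => (0 : ℝ)) i := by
      cases i with
      | inl i => exact (hz.1 i).1
      | inr j => simp
    nlinarith [mul_nonneg (mul_nonneg hpos.le he0) hy0]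
  -- constants
  set vmin : ℝ := Finset.univ.inf' hune v with hvmin
  have hvminpos : 0 < vmin := by
    rw [hvmin, Finset.lt_inf'_iff]; exact fun i _ => hv i
  have hvminle : ∀ i, vmin ≤ v i := fun i => Finset.inf'_le _ (Finset.mem_univ i)
  set vsum : ℝ := ∑ i, v i with hvsum
  have hvsumpos : 0 < vsum := Finset.sum_pos (fun i _ => hv i) hune
  refine ⟨vsum / vmin, div_pos hvsumpos hvminpos, ?_⟩
  intro z hzstep hz0 _ t
  have hDt : ∀ t, inD wmax (z t) := by
    intro t
    induction t with
    | zero => exact hz0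
    | succ t ih => rw [hzstep t]; exact hinv _ ih
  have hztnn : ∀ t i, 0 ≤ z t i := fun t => znn _ (hDt t)
  set s : ℕ → ℝ := fun t => ∑ i, v i * z t i with hs
  have hsnn : ∀ t, 0 ≤ s t := fun t =>
    Finset.sum_nonneg fun i _ => mul_nonneg (hv i).le (hztnn t i)
  have hsstep : ∀ t, s (t + 1) ≤ ρ * s t := by
    intro t
    have h1 : s (t + 1) ≤ ∑ i, v i * (M *ᵥ z t) i := by
      rw [hs]
      refine Finset.sum_le_sum fun i _ => ?_
      rw [hzstep t]
      exact mul_le_mul_of_nonneg_left (hdom _ (hDt t) i) (hv i).le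
    calc s (t + 1) ≤ ∑ i, v i * (M *ᵥ z t) i := h1
      _ = ρ * s t := hdot (z t)
  have hsbound : ∀ t, s t ≤ ρ ^ t * s 0 := by
    intro t
    induction t with
    | zero => simp
    | succ t ih =>
        calc s (t + 1) ≤ ρ * s t := hsstep t
          _ ≤ ρ * (ρ ^ t * s 0) := mul_le_mul_of_nonneg_left ih hρ0
          _ = ρ ^ (t + 1) * s 0 := by rw [pow_succ]; ring
  have h1 : ‖z t‖ ≤ s t / vmin := by
    rw [pi_norm_le_iff_of_nonneg (div_nonneg (hsnn t) hvminpos.le)]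
    intro i
    rw [Real.norm_eq_abs, abs_of_nonneg (hztnn t i), le_div_iff₀ hvminpos]
    calc z t i * vmin ≤ v i * z t i := by nlinarith [hvminle i, hztnn t i, hv i]
      _ ≤ s t := Finset.single_le_sum
          (f := fun j => v j * z t j)
          (fun j _ => mul_nonneg (hv j).le (hztnn t j)) (Finset.mem_univ i)
  have h2 : s 0 ≤ vsum * ‖z 0‖ := by
    rw [hs, hvsum, Finset.sum_mul]
    refine Finset.sum_le_sum fun i _ => ?_
    refine mul_le_mul_of_nonneg_left ?_ (hv i).le
    calc z 0 i ≤ |z 0 i| := le_abs_self _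
      _ = ‖z 0 i‖ := (Real.norm_eq_abs _).symm
      _ ≤ ‖z 0‖ := norm_le_pi_norm (z 0) i
  calc ‖z t‖ ≤ s t / vmin := h1
    _ ≤ (ρ ^ t * s 0) / vmin := by
        apply div_le_div_of_nonneg_right (hsbound t) hvminpos.le
    _ ≤ (ρ ^ t * (vsum * ‖z 0‖)) / vmin := by
        apply div_le_div_of_nonneg_right
          (mul_le_mul_of_nonneg_left h2 (pow_nonneg hρ0 t)) hvminpos.le
    _ = vsum / vmin * ρ ^ t * ‖z 0‖ := by field_simp

/-- the Jacobian of the update map at the healthy state equals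
`I − hD_f + hB_f`; and if `ρ(D_f⁻¹B_f) ≤ 1` then `ρ(I − hD_f + hB_f) ≤ 1` and the healthy
state is locally exponentially stable with convergence rate `ρ(I − hD_f + hB_f)`. -/
theorem stmt7 {n m : ℕ} (h wmax : ℝ) (δ : Fin n → ℝ) (δw : Fin m → ℝ)
    (B : Matrix (Fin n) (Fin n) ℝ) (Bw : Matrix (Fin n) (Fin m) ℝ)
    (Cw : Matrix (Fin m) (Fin n) ℝ)
    (hA1 : A1 h δ δw B Bw Cw wmax)
    (hA2 : Irred (BfM B Bw Cw)) :
    (⇑(fderiv ℝ (step h (DfM δ δw) (BfM B Bw Cw)) (0 : SIdx n m → ℝ)) =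
      (1 - h • DfM δ δw + h • BfM B Bw Cw).mulVec) ∧
    (specRad ((DfM δ δw)⁻¹ * BfM B Bw Cw) ≤ 1 →
      specRad (1 - h • DfM δ δw + h • BfM B Bw Cw) ≤ 1 ∧
      ∃ ε > (0 : ℝ), ∃ c > (0 : ℝ), ∀ z : ℕ → SIdx n m → ℝ,
        (∀ t, z (t + 1) = step h (DfM δ δw) (BfM B Bw Cw) (z t)) →
        inD wmax (z 0) → ‖z 0‖ ≤ ε →
        ∀ t, ‖z t‖ ≤ c * specRad (1 - h • DfM δ δw + h • BfM B Bw Cw) ^ t * ‖z 0‖) :=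
  stmt7_aux h wmax δ δw B Bw Cw hA1 hA2
end

section
/- Consider the time-invariant single-virus layered SIWS model under Assumptions A1 and A2, with homogeneous parameters: β_{ij} = β and δ_i = δ for all i, j ∈ {1,…,n}, and δ^w_j = δ^w, β^w_{ij} = β, c^w_{ji} = c for all i ∈ {1,…,n}, j ∈ {1,…,m}; set ĉ = c/δ^w, and assume nβ(1 + mĉ) > δ. Then the endemic equilibrium of this homogeneous system is given by x*_i = 1 − δ/(nβ(1 + mĉ)) for all i ∈ {1,…,n} and w*_j = nĉ·(1 − δ/(nβ(1 + mĉ))) for all j ∈ {1,…,m}; i.e., this point is a fixed point of the dynamics with all entries strictly positive. -/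
open Matrix Filter

/-- The homogeneous endemic infection level `x* = 1 − δ/(nβ(1 + m ĉ))` with `ĉ = c/δ^w`. -/
noncomputable def homX (n m : ℕ) (β δ0 δw0 c : ℝ) : ℝ :=
  1 - δ0 / ((n : ℝ) * β * (1 + (m : ℝ) * (c / δw0)))

/-- The homogeneous endemic equilibrium `(x*, w*) = (x*, n ĉ x*)`. -/
noncomputable def homZ (n m : ℕ) (β δ0 δw0 c : ℝ) : SIdx n m → ℝ :=
  Sum.elim (fun _ => homX n m β δ0 δw0 c)
    (fun _ => (n : ℝ) * (c / δw0) * homX n m β δ0 δw0 c)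

/-- in the homogeneous case with `nβ(1 + m ĉ) > δ`, the point
`x*_i = 1 − δ/(nβ(1+mĉ))`, `w*_j = n ĉ x*` is a strictly positive fixed point of the
dynamics, i.e. the endemic equilibrium. -/
theorem stmt8 {n m : ℕ} (h wmax β δ0 δw0 c : ℝ)
    (hA1 : A1 h (fun _ : Fin n => δ0) (fun _ : Fin m => δw0)
      (Matrix.of fun _ _ => β) (Matrix.of fun _ _ => β) (Matrix.of fun _ _ => c) wmax)
    (hA2 : Irred (BfM (n := n) (m := m) (Matrix.of fun _ _ => β)
      (Matrix.of fun _ _ => β) (Matrix.of fun _ _ => c)))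
    (hgt : δ0 < (n : ℝ) * β * (1 + (m : ℝ) * (c / δw0))) :
    step h (DfM (fun _ : Fin n => δ0) (fun _ : Fin m => δw0))
        (BfM (Matrix.of fun _ _ => β) (Matrix.of fun _ _ => β) (Matrix.of fun _ _ => c))
        (homZ n m β δ0 δw0 c) = homZ n m β δ0 δw0 c ∧
      ∀ p, 0 < homZ n m β δ0 δw0 c p := by
  rcases Nat.eq_zero_or_pos n with hn | hn
  · subst hn
    rcases Nat.eq_zero_or_pos m with hm | hm
    · subst hm
      constructor
      · funext p; exact p.elim (fun i => i.elim0) (fun j => j.elim0)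
      · intro p; exact p.elim (fun i => i.elim0) (fun j => j.elim0)
    · obtain ⟨k, -⟩ := hA1.Cw_row_pos ⟨0, hm⟩
      exact k.elim0
  · have hδ0 : 0 < δ0 := hA1.delta_pos ⟨0, hn⟩
    set K : ℝ := (n : ℝ) * β * (1 + (m : ℝ) * (c / δw0)) with hKdef
    have hKpos : 0 < K := lt_trans hδ0 hgt
    have hKne : K ≠ 0 := ne_of_gt hKpos
    have hxpos : 0 < homX n m β δ0 δw0 c := by
      rw [homX]
      have : δ0 / K < 1 := (div_lt_one hKpos).mpr hgt
      linarith
    have hxval : 1 - homX n m β δ0 δw0 c = δ0 / K := by rw [homX, ← hKdef]; ring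
    have h1Z : (1 : Matrix (SIdx n m) (SIdx n m) ℝ) - Zm (homZ n m β δ0 δw0 c) =
        Matrix.diagonal (Sum.elim (fun _ : Fin n => 1 - homX n m β δ0 δw0 c)
          (fun _ : Fin m => (1:ℝ))) := by
      funext p q
      simp only [Matrix.sub_apply, Matrix.one_apply, Zm, Matrix.diagonal_apply]
      by_cases hpq : p = q
      · subst hpq; cases p <;> simp [homZ]
      · simp [hpq]
    constructor
    · funext p
      have key : ((DfM (fun _ : Fin n => δ0) (fun _ : Fin m => δw0) -
          (1 - Zm (homZ n m β δ0 δw0 c)) *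
            BfM (Matrix.of fun _ _ => β) (Matrix.of fun _ _ => β)
              (Matrix.of fun _ _ => c)).mulVec (homZ n m β δ0 δw0 c)) p = 0 := by
        rw [h1Z]
        cases p with
        | inl i =>
          simp only [Matrix.mulVec, dotProduct, Fintype.sum_sum_type, DfM, BfM,
            Matrix.sub_apply, Matrix.diagonal_apply, Matrix.diagonal_mul, Sum.elim_inl,
            Sum.elim_inr, Matrix.fromBlocks_apply₁₁, Matrix.fromBlocks_apply₁₂,
            Matrix.of_apply, homZ]
          simp only [Sum.inl.injEq, reduceCtorEq, if_false, sub_mul, zero_mul, ite_mul,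
            Finset.sum_sub_distrib, Finset.sum_ite_eq, Finset.mem_univ, if_true,
            Finset.sum_const, Finset.card_univ, Fintype.card_fin, nsmul_eq_mul]
          rw [show homX n m β δ0 δw0 c = 1 - δ0 / K from by rw [homX, ← hKdef]]
          clear_value K
          generalize c / δw0 = u at hKdef ⊢
          subst hKdef
          have hKne' : (↑n : ℝ) * β * (1 + ↑m * u) ≠ 0 := hKne
          have hβ : β ≠ 0 := fun h0 => hKne' (by rw [h0]; ring)
          have h1u : 1 + ↑m * u ≠ 0 := fun h0 => hKne' (by rw [h0]; ring)
          field_simp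
          ring
        | inr j =>
          simp only [Matrix.mulVec, dotProduct, Fintype.sum_sum_type, DfM, BfM,
            Matrix.sub_apply, Matrix.diagonal_apply, Matrix.diagonal_mul, Sum.elim_inl,
            Sum.elim_inr, Matrix.fromBlocks_apply₂₁, Matrix.fromBlocks_apply₂₂,
            Matrix.of_apply, homZ]
          have hδw : δw0 ≠ 0 := ne_of_gt (hA1.deltaw_pos j)
          simp only [Sum.inr.injEq, reduceCtorEq, if_false, Matrix.zero_apply, sub_mul,
            zero_mul, one_mul, ite_mul, Finset.sum_sub_distrib, Finset.sum_ite_eq,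
            Finset.mem_univ, if_true, Finset.sum_const, Finset.card_univ, Fintype.card_fin,
            nsmul_eq_mul]
          field_simp
          ring
      show homZ n m β δ0 δw0 c p - h * _ = homZ n m β δ0 δw0 c p
      rw [key]; ring
    · intro p
      cases p with
      | inl i => exact hxpos
      | inr j =>
        obtain ⟨k, hck⟩ := hA1.Cw_row_pos j
        have hc : 0 < c := hck
        have hδw : 0 < δw0 := hA1.deltaw_pos j
        have : (0:ℝ) < (n : ℝ) := by exact_mod_cast hn
        simp only [homZ, Sum.elim_inr]
        positivity
end
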